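/- arXiv:1605.05287 — 5 statements merged into one kernel-verified Lean document; each statement's English description precedes it below -/
import Mathlib

section
/- If the polynomials f₁(x), …, f_n(x) ∈ ℝ[x] have positive leading coefficients, then they are pairwise compatible if and only if they are compatible. -/
open Polynomial Finset


/-- A real polynomial is real-rooted (has only real zeros) if all of its complex
zeros are real; by convention constant polynomials, including `0`, are real-rooted. -/
def RealRooted (f : Polynomial ℝ) : Prop :=
  f = 0 ∨ ∀ z : ℂ, Polynomial.aeval z f = 0 → z.im = 0

/-- Two polynomials are compatible if every conic combination with positive
coefficients is real-rooted. -/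
def CompatiblePair (f g : Polynomial ℝ) : Prop :=
  ∀ c d : ℝ, 0 < c → 0 < d → RealRooted (Polynomial.C c * f + Polynomial.C d * g)

/-- A family of polynomials is compatible if every conic combination with positive
coefficients is real-rooted. -/
def Compatible {k : ℕ} (f : Fin k → Polynomial ℝ) : Prop :=
  ∀ c : Fin k → ℝ, (∀ j, 0 < c j) → RealRooted (∑ j, Polynomial.C (c j) * f j)

namespace CSaux

open Complex Filter Set

/-- Nonzero coefficient at the top degree of a positive combination. -/
lemma combo_ne_zero {n : ℕ} (hn : 0 < n) (f : Fin n → Polynomial ℝ)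
    (hlead : ∀ i, 0 < (f i).leadingCoeff) (c : Fin n → ℝ) (hc : ∀ j, 0 < c j) :
    (∑ j, Polynomial.C (c j) * f j) ≠ 0 := by
  have hne : (Finset.univ : Finset (Fin n)).Nonempty := by
    simpa [Finset.univ_nonempty_iff] using Fin.pos_iff_nonempty.1 hn
  set D := Finset.univ.sup (fun j => (f j).natDegree) with hD
  obtain ⟨j₀, -, hj₀⟩ := Finset.exists_mem_eq_sup Finset.univ hne (fun j => (f j).natDegree)
  have hcoeff : ∀ j : Fin n, 0 ≤ (f j).coeff D := by
    intro j
    rcases lt_or_eq_of_le (Finset.le_sup (f := fun j => (f j).natDegree) (Finset.mem_univ j)) with h | h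
    · rw [Polynomial.coeff_eq_zero_of_natDegree_lt h]
    · have : (f j).natDegree = D := h
      rw [← this, Polynomial.coeff_natDegree]; exact (hlead j).le
  have hcoeff0 : 0 < (f j₀).coeff D := by
    rw [hD, hj₀, Polynomial.coeff_natDegree]; exact hlead j₀
  intro h
  have h2 : (∑ j, Polynomial.C (c j) * f j).coeff D = 0 := by rw [h]; simp
  rw [Polynomial.finset_sum_coeff] at h2
  have : 0 < ∑ j, (Polynomial.C (c j) * f j).coeff D := by
    apply Finset.sum_pos'
    · intro j _
      rw [Polynomial.coeff_C_mul]
      exact mul_nonneg (hc j).le (hcoeff j)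
    · refine ⟨j₀, Finset.mem_univ _, ?_⟩
      rw [Polynomial.coeff_C_mul]
      exact mul_pos (hc j₀) hcoeff0
  exact absurd h2 (ne_of_gt this)
  

lemma pair_ne_zero (p q : Polynomial ℝ) (hp : 0 < p.leadingCoeff) (hq : 0 < q.leadingCoeff)
    {c d : ℝ} (hc : 0 < c) (hd : 0 < d) : Polynomial.C c * p + Polynomial.C d * q ≠ 0 := by
  have := combo_ne_zero (n := 2) (by norm_num) ![p, q] (by
      intro i; fin_cases i <;> simpa) ![c, d] (by intro j; fin_cases j <;> simpa)
  simpa [Fin.sum_univ_two] using this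

lemma eventually_pos (p : Polynomial ℝ) (hp : 0 < p.leadingCoeff) :
    ∀ᶠ x in atTop, 0 < p.eval x := by
  rcases lt_or_ge 0 p.degree with hdeg | hdeg
  · exact (p.tendsto_atTop_of_leadingCoeff_nonneg hdeg hp.le).eventually_gt_atTop 0
  · obtain ⟨a, rfl⟩ : ∃ a, p = Polynomial.C a := ⟨p.coeff 0, Polynomial.eq_C_of_degree_le_zero hdeg⟩
    filter_upwards with x
    simpa using by simpa [Polynomial.leadingCoeff] using hp

lemma aeval_real (p : Polynomial ℝ) (x : ℝ) :
    Polynomial.aeval (x : ℂ) p = ((p.eval x : ℝ) : ℂ) := by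
  have : (x : ℂ) = algebraMap ℝ ℂ x := rfl
  rw [this, Polynomial.aeval_algebraMap_apply]
  simp

/-- real-rooted and nonzero implies nonvanishing off the real axis -/
lemma rr_ne {p : Polynomial ℝ} (h : RealRooted p) (hp : p ≠ 0) {z : ℂ} (hz : z.im ≠ 0) :
    Polynomial.aeval z p ≠ 0 := by
  rcases h with h | h
  · exact absurd h hp
  · intro h0; exact hz (h z h0)

/-- the slit domain: complement of a left-infinite real ray -/
def Omega (R : ℝ) : Set ℂ := {w | w.im ≠ 0 ∨ R < w.re}

lemma omega_preconnected (R : ℝ) : IsPreconnected (Omega R) := by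
  have hset : Omega R = ({w : ℂ | 0 < w.im} ∪ {w : ℂ | R < w.re}) ∪ {w : ℂ | w.im < 0} := by
    ext w
    simp only [Omega, Set.mem_setOf_eq, Set.mem_union, Set.mem_setOf_eq]
    constructor
    · rintro (h | h)
      · rcases h.lt_or_gt with h | h
        · right; exact h
        · left; left; exact h
      · left; right; exact h
    · rintro ((h | h) | h)
      · exact Or.inl h.ne'
      · exact Or.inr h
      · exact Or.inl h.ne
  rw [hset]
  have hUV : IsPreconnected ({w : ℂ | 0 < w.im} ∪ {w : ℂ | R < w.re}) := by
    apply IsPreconnected.union (x := (R + 1 : ℝ) + Complex.I)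
    · simp
    · simp
    · exact ((convex_halfSpace_im_gt 0).isPreconnected)
    · exact ((convex_halfSpace_re_gt R).isPreconnected)
  apply IsPreconnected.union ((R + 1 : ℝ) - Complex.I)
  · exact Set.mem_union_right _ (by simp)
  · simp
  · exact hUV
  · exact ((convex_halfSpace_im_lt 0).isPreconnected)

theorem forward {n : ℕ} (f : Fin n → Polynomial ℝ) (hlead : ∀ i, 0 < (f i).leadingCoeff)
    (hp : ∀ i j, CompatiblePair (f i) (f j)) : Compatible f := by
  intro c hc
  rcases Nat.eq_zero_or_pos n with h0 | hn
  · subst h0; left; simp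
  right
  intro z hz
  by_contra him
  -- notation
  set F : Fin n → ℂ → ℂ := fun j w => Polynomial.aeval w (f j) with hF
  have hfne : ∀ j, f j ≠ 0 := fun j => Polynomial.leadingCoeff_ne_zero.1 (hlead j).ne'
  have hne : (Finset.univ : Finset (Fin n)).Nonempty := by
    simpa [Finset.univ_nonempty_iff] using Fin.pos_iff_nonempty.1 hn
  -- each f j is real-rooted
  have hRR : ∀ j, RealRooted (f j) := by
    intro j
    have h := hp j j 1 1 one_pos one_pos
    rcases h with h | h
    · exfalso
      apply pair_ne_zero (f j) (f j) (hlead j) (hlead j) one_pos one_pos h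
    · right
      intro w hw
      apply h w
      simp only [map_add, map_mul, Polynomial.aeval_C]
      rw [hw]; ring
  have hFne : ∀ j (w : ℂ), w.im ≠ 0 → F j w ≠ 0 := by
    intro j w hw
    exact rr_ne (hRR j) (hfne j) hw
  -- bound beyond which all polynomials are positive
  obtain ⟨R, hR⟩ : ∃ R : ℝ, ∀ x ≥ R, ∀ j, 0 < (f j).eval x := by
    have h : ∀ᶠ x in Filter.atTop, ∀ j, 0 < (f j).eval x :=
      Filter.eventually_all.2 fun j => eventually_pos _ (hlead j)
    exact Filter.eventually_atTop.1 h
  -- nonvanishing on Omega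
  have hF0 : ∀ j, ∀ w ∈ Omega R, F j w ≠ 0 := by
    intro j w hw
    rcases ne_or_eq w.im 0 with h | h
    · exact hFne j w h
    · rcases hw with h' | h'
      · exact absurd h h'
      · have hw' : w = ((w.re : ℝ) : ℂ) := Complex.ext rfl (by simp [h])
        rw [hw', hF]
        simp only
        rw [aeval_real]
        exact_mod_cast (hR w.re h'.le j).ne'
  -- ratios take values in the slit plane on Omega
  have hslit : ∀ i j, ∀ w ∈ Omega R, F i w / F j w ∈ Complex.slitPlane := by
    intro i j w hw
    rcases ne_or_eq w.im 0 with h | h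
    · by_contra hmem
      rw [Complex.mem_slitPlane_iff] at hmem
      push_neg at hmem
      obtain ⟨h1, h2⟩ := hmem
      set q : ℂ := F i w / F j w with hq
      have hqne : q ≠ 0 := div_ne_zero (hFne i w h) (hFne j w h)
      have hqre : q.re < 0 := by
        rcases lt_or_eq_of_le h1 with h' | h'
        · exact h'
        · exfalso; exact hqne (Complex.ext (by simp [h'.symm]) (by simp [h2]))
      have hFi : F i w = ((q.re : ℝ) : ℂ) * F j w := by
        have : q = ((q.re : ℝ) : ℂ) := Complex.ext rfl (by simp [h2])
        rw [← this, hq, div_mul_cancel₀]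
        exact hFne j w h
      -- contradiction with pairwise compatibility
      have hcomb := hp i j 1 (-q.re) one_pos (by linarith)
      have hcne := pair_ne_zero (f i) (f j) (hlead i) (hlead j) one_pos (show (0:ℝ) < -q.re by linarith)
      have := rr_ne hcomb hcne h
      apply this
      simp only [map_add, map_mul, Polynomial.aeval_C]
      rw [show ((algebraMap ℝ ℂ) 1) = 1 by simp, show ((algebraMap ℝ ℂ) (-q.re)) = ((-q.re : ℝ) : ℂ) by simp]
      have hFi' : (Polynomial.aeval w) (f i) = ((q.re : ℝ) : ℂ) * (Polynomial.aeval w) (f j) := hFi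
      rw [hFi']
      push_cast
      ring
    · rcases hw with h' | h'
      · exact absurd h h'
      · have hw' : w = ((w.re : ℝ) : ℂ) := Complex.ext rfl (by simp [h])
        rw [hF]; simp only
        rw [hw', aeval_real, aeval_real, ← Complex.ofReal_div]
        rw [Complex.mem_slitPlane_iff]
        left
        simp only [Complex.ofReal_re]
        exact div_pos (hR w.re h'.le i) (hR w.re h'.le j)
  -- the argument functions
  set A : Fin n → Fin n → ℂ → ℝ := fun i j w => (F i w / F j w).arg with hA
  have hAcont : ∀ i j, ContinuousOn (A i j) (Omega R) := by
    intro i j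
    have hg : ContinuousOn (fun w => F i w / F j w) (Omega R) := by
      apply ContinuousOn.div
      · exact ((f i).continuous_aeval).continuousOn
      · exact ((f j).continuous_aeval).continuousOn
      · intro w hw; exact hF0 j w hw
    intro w hw
    have : ContinuousWithinAt (Complex.arg ∘ fun u => F i u / F j u) (Omega R) w :=
      ContinuousAt.comp_continuousWithinAt (g := Complex.arg)
        (f := fun u => F i u / F j u) (Complex.continuousAt_arg (hslit i j w hw)) (hg w hw)
    exact this
  have hAlt : ∀ i j, ∀ w ∈ Omega R, |A i j w| < Real.pi := by
    intro i j w hw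
    rw [abs_lt]
    exact ⟨Complex.neg_pi_lt_arg _,
      lt_of_le_of_ne (Complex.arg_le_pi _) (Complex.slitPlane_arg_ne_pi (hslit i j w hw))⟩
  -- base point
  set x₀ : ℂ := ((R + 1 : ℝ) : ℂ) with hx₀
  have hx₀mem : x₀ ∈ Omega R := by
    right; simp [hx₀]
  have hA0 : ∀ i j, A i j x₀ = 0 := by
    intro i j
    have hFx : ∀ k, F k x₀ = (((f k).eval (R+1) : ℝ) : ℂ) := fun k => by
      rw [hF]; simp only; rw [hx₀, aeval_real]
    rw [hA]; simp only
    rw [hFx i, hFx j, ← Complex.ofReal_div]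
    apply Complex.arg_ofReal_of_nonneg
    exact (div_pos (hR _ (by linarith) i) (hR _ (by linarith) j)).le
  -- the cocycle identity
  have hcoc : ∀ i j k, ∀ w ∈ Omega R, A i k w = A i j w + A j k w := by
    intro i j k w hw
    set s : ℂ → ℝ := fun u => A i j u + A j k u - A i k u with hs
    have hint : ∀ u ∈ Omega R, ∃ m : ℤ, s u = m * (2 * Real.pi) := by
      intro u hu
      have ha := hF0 i u hu
      have hb := hF0 j u hu
      have hcc := hF0 k u hu
      have habs : ∀ p q : Fin n, F p u / F q u ≠ 0 → Complex.exp (↑(A p q u) * Complex.I)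
          = (F p u / F q u) / ↑(‖F p u / F q u‖) := by
        intro p q hpq
        have h := Complex.norm_mul_exp_arg_mul_I (F p u / F q u)
        rw [hA]; simp only
        rw [eq_div_iff (Complex.ofReal_ne_zero.2 (norm_ne_zero_iff.2 hpq))]
        rw [mul_comm]
        exact h
      have hexp : Complex.exp (↑(s u) * Complex.I) = 1 := by
        have hsplit : (↑(s u) : ℂ) * Complex.I =
            (↑(A i j u) * Complex.I + ↑(A j k u) * Complex.I) - ↑(A i k u) * Complex.I := by
          rw [hs]; push_cast; ring
        rw [hsplit, Complex.exp_sub, Complex.exp_add,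
          habs i j (div_ne_zero ha hb), habs j k (div_ne_zero hb hcc),
          habs i k (div_ne_zero ha hcc)]
        rw [norm_div, norm_div, norm_div]
        push_cast
        have hxa : (‖F i u‖ : ℂ) ≠ 0 := by
          exact_mod_cast norm_ne_zero_iff.2 ha
        have hxb : (‖F j u‖ : ℂ) ≠ 0 := by
          exact_mod_cast norm_ne_zero_iff.2 hb
        have hxc : (‖F k u‖ : ℂ) ≠ 0 := by
          exact_mod_cast norm_ne_zero_iff.2 hcc
        field_simp
      obtain ⟨m, hm⟩ := Complex.exp_eq_one_iff.1 hexp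
      refine ⟨m, ?_⟩
      have hI : (Complex.I : ℂ) ≠ 0 := Complex.I_ne_zero
      have : (↑(s u) : ℂ) = ↑m * (2 * ↑Real.pi) := by
        apply mul_right_cancel₀ hI
        rw [hm]; ring
      exact_mod_cast this
    have hs0 : s x₀ = 0 := by
      rw [hs]; simp [hA0]
    have hscont : ContinuousOn s (Omega R) :=
      ((hAcont i j).add (hAcont j k)).sub (hAcont i k)
    have himg : IsPreconnected (s '' Omega R) := (omega_preconnected R).image s hscont
    have h0mem : (0:ℝ) ∈ s '' Omega R := ⟨x₀, hx₀mem, hs0⟩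
    have hwmem : s w ∈ s '' Omega R := ⟨w, hw, rfl⟩
    obtain ⟨m, hm⟩ := hint w hw
    have hm0 : m = 0 := by
      by_contra hmne
      have hpi : Real.pi > 0 := Real.pi_pos
      rcases lt_or_gt_of_ne hmne with hneg | hpos
      · -- s w ≤ -2π < -π < 0
        have hle : s w ≤ -(2*Real.pi) := by
          rw [hm]
          have hm1 : m ≤ -1 := by omega
          have : (m : ℝ) ≤ -1 := by exact_mod_cast hm1
          nlinarith
        have hmemI : -Real.pi ∈ s '' Omega R := by
          apply himg.Icc_subset hwmem h0mem
          constructor <;> nlinarith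
        obtain ⟨u, hu, hu'⟩ := hmemI
        obtain ⟨m', hm'⟩ := hint u hu
        rw [hu'] at hm'
        have : (2 * m' + 1 : ℝ) * Real.pi = 0 := by push_cast; nlinarith [hm']
        have h2 : (2 * m' + 1 : ℝ) = 0 := by
          rcases mul_eq_zero.1 this with h | h
          · exact h
          · exact absurd h hpi.ne'
        have : (2 * m' + 1 : ℤ) = 0 := by exact_mod_cast h2
        omega
      · have hle : 2*Real.pi ≤ s w := by
          rw [hm]
          have : (1:ℝ) ≤ (m:ℝ) := by exact_mod_cast hpos
          nlinarith
        have hmemI : Real.pi ∈ s '' Omega R := by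
          apply himg.Icc_subset h0mem hwmem
          constructor <;> nlinarith
        obtain ⟨u, hu, hu'⟩ := hmemI
        obtain ⟨m', hm'⟩ := hint u hu
        rw [hu'] at hm'
        have : (2 * m' - 1 : ℝ) * Real.pi = 0 := by push_cast; nlinarith [hm']
        have h2 : (2 * m' - 1 : ℝ) = 0 := by
          rcases mul_eq_zero.1 this with h | h
          · exact h
          · exact absurd h hpi.ne'
        have : (2 * m' - 1 : ℤ) = 0 := by exact_mod_cast h2
        omega
    rw [hm0] at hm
    simp at hm
    have : A i j w + A j k w - A i k w = 0 := hm
    linarith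
  -- z lies in Omega
  have hzΩ : z ∈ Omega R := Or.inl him
  set j₀ : Fin n := ⟨0, hn⟩ with hj₀
  set β : Fin n → ℝ := fun j => A j j₀ z with hβ
  have hβdiff : ∀ i j, β i - β j = A i j z := by
    intro i j
    have h := hcoc i j j₀ z hzΩ
    rw [hβ]; simp only; linarith
  set M := Finset.univ.sup' hne β with hM
  set m := Finset.univ.inf' hne β with hm
  obtain ⟨jM, -, hjM⟩ := Finset.exists_mem_eq_sup' hne β
  obtain ⟨jm, -, hjm⟩ := Finset.exists_mem_eq_inf' hne β
  have hMle : ∀ j, β j ≤ M := fun j => Finset.le_sup' β (Finset.mem_univ j)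
  have hmle : ∀ j, m ≤ β j := fun j => Finset.inf'_le β (Finset.mem_univ j)
  have hMm : M - m < Real.pi := by
    have h1 : M - m = A jM jm z := by
      rw [hM, hm, hjM, hjm, ← hβdiff jM jm]
    rw [h1]
    calc A jM jm z ≤ |A jM jm z| := le_abs_self _
      _ < Real.pi := hAlt jM jm z hzΩ
  set φ := (M + m)/2 with hφ
  have hcos : ∀ j, 0 < Real.cos (β j - φ) := by
    intro j
    apply Real.cos_pos_of_mem_Ioo
    constructor
    · simp only [hφ]
      have := hmle j
      linarith
    · simp only [hφ]
      have := hMle j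
      linarith
  set w0 : ℂ := F j₀ z with hw0
  have hw0ne : w0 ≠ 0 := hF0 j₀ z hzΩ
  have habs0 : (‖w0‖ : ℂ) ≠ 0 := by
    exact_mod_cast norm_ne_zero_iff.2 hw0ne
  have hterm : ∀ j : Fin n,
      Complex.exp (-(φ:ℂ) * Complex.I) * ((starRingEnd ℂ) w0 * F j z)
        = ((‖w0‖ * ‖F j z‖ : ℝ) : ℂ)
            * Complex.exp (((β j - φ : ℝ) : ℂ) * Complex.I) := by
    intro j
    have hFz : F j z ≠ 0 := hF0 j z hzΩ
    have h1 : F j z / w0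
        = ((‖F j z / w0‖ : ℝ) : ℂ) * Complex.exp (((β j : ℝ) : ℂ) * Complex.I) := by
      have h := Complex.norm_mul_exp_arg_mul_I (F j z / w0)
      rw [hβ]; simp only [hA]
      exact h.symm
    have h2 : (starRingEnd ℂ) w0 * F j z
        = ((Complex.normSq w0 : ℝ) : ℂ) * (F j z / w0) := by
      rw [← Complex.mul_conj]
      field_simp
    rw [h2, h1, norm_div, Complex.normSq_eq_norm_sq]
    have h3 : Complex.exp (((β j - φ : ℝ) : ℂ) * Complex.I) =
        Complex.exp (-(φ:ℂ) * Complex.I) * Complex.exp (((β j : ℝ) : ℂ) * Complex.I) := by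
      rw [← Complex.exp_add]; congr 1; push_cast; ring
    rw [h3]
    push_cast
    field_simp
  have hsum0 : ∑ j, ((c j : ℝ) : ℂ) * F j z = 0 := by
    calc ∑ j, ((c j : ℝ) : ℂ) * F j z
        = ∑ j, Polynomial.aeval z (Polynomial.C (c j) * f j) := by
          apply Finset.sum_congr rfl
          intro j _
          simp only [map_mul, Polynomial.aeval_C]
          rw [hF]
          norm_num
      _ = 0 := by rw [← map_sum]; exact hz
  have hre : (0:ℝ) < ∑ j, (c j) * ((‖w0‖ * ‖F j z‖) * Real.cos (β j - φ)) := by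
    apply Finset.sum_pos _ hne
    intro j _
    have h1 : 0 < ‖w0‖ := norm_pos_iff.mpr hw0ne
    have h2 : 0 < ‖F j z‖ := norm_pos_iff.mpr (hF0 j z hzΩ)
    have h3 := hcos j
    have h4 := hc j
    positivity
  have hcontra : ∑ j, (c j) * ((‖w0‖ * ‖F j z‖) * Real.cos (β j - φ)) = 0 := by
    have hC : ∑ j, ((c j : ℝ) : ℂ) *
        (Complex.exp (-(φ:ℂ) * Complex.I) * ((starRingEnd ℂ) w0 * F j z)) = 0 := by
      have heq : ∑ j, ((c j : ℝ) : ℂ) *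
          (Complex.exp (-(φ:ℂ) * Complex.I) * ((starRingEnd ℂ) w0 * F j z))
          = Complex.exp (-(φ:ℂ) * Complex.I) * ((starRingEnd ℂ) w0 * ∑ j, ((c j : ℝ) : ℂ) * F j z) := by
        rw [Finset.mul_sum, Finset.mul_sum]
        apply Finset.sum_congr rfl
        intro j _
        ring
      rw [heq, hsum0]
      ring
    have hC2 : ∑ j, ((c j : ℝ) : ℂ) *
        (((‖w0‖ * ‖F j z‖ : ℝ) : ℂ)
          * Complex.exp (((β j - φ : ℝ) : ℂ) * Complex.I)) = 0 := by
      rw [← hC]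
      apply Finset.sum_congr rfl
      intro j _
      rw [hterm j]
    have := congrArg Complex.re hC2
    rw [Complex.re_sum] at this
    simp only [Complex.zero_re] at this
    rw [← this]
    apply Finset.sum_congr rfl
    intro j _
    rw [Complex.re_ofReal_mul, Complex.re_ofReal_mul, Complex.exp_ofReal_mul_I_re]
  exact absurd hcontra hre.ne'

theorem backward {n : ℕ} (f : Fin n → Polynomial ℝ) (hlead : ∀ i, 0 < (f i).leadingCoeff)
    (hC : Compatible f) (i j : Fin n) : CompatiblePair (f i) (f j) := by
  intro c d hc hd
  right
  intro z hzroot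
  by_contra him
  have hn : 0 < n := i.pos
  set g : Polynomial ℝ := Polynomial.C c * f i + Polynomial.C d * f j with hg
  set T : Polynomial ℝ := ∑ k, f k with hT
  have key : ∀ μ : ℝ, 0 < μ → ∀ w : ℂ,
      Polynomial.aeval w (Polynomial.C μ * T + g) = 0 → w.im = 0 := by
    intro μ hμ
    set c' : Fin n → ℝ := fun k => μ + (if k = i then c else 0) + (if k = j then d else 0) with hc'
    have hc'pos : ∀ k, 0 < c' k := by
      intro k
      rw [hc']
      simp only
      have h1 : 0 ≤ (if k = i then c else 0) := by split_ifs <;> linarith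
      have h2 : 0 ≤ (if k = j then d else 0) := by split_ifs <;> linarith
      linarith
    have hpoly : ∑ k, Polynomial.C (c' k) * f k = Polynomial.C μ * T + g := by
      rw [hc', hg, hT]
      have step : ∀ k : Fin n, Polynomial.C (μ + (if k = i then c else 0) + (if k = j then d else 0)) * f k
          = Polynomial.C μ * f k + (if k = i then Polynomial.C c * f k else 0)
            + (if k = j then Polynomial.C d * f k else 0) := by
        intro k
        rw [Polynomial.C_add, Polynomial.C_add, apply_ite Polynomial.C, apply_ite Polynomial.C]
        simp only [map_zero]
        split_ifs <;> ring
      simp only [step]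
      rw [Finset.sum_add_distrib, Finset.sum_add_distrib,
        Finset.sum_ite_eq' Finset.univ i (fun k => Polynomial.C c * f k),
        Finset.sum_ite_eq' Finset.univ j (fun k => Polynomial.C d * f k),
        Finset.mul_sum]
      simp [Finset.mem_univ]
      abel
    have h := hC c' hc'pos
    rw [hpoly] at h
    have hne0 : Polynomial.C μ * T + g ≠ 0 := by
      rw [← hpoly]; exact combo_ne_zero hn f hlead c' hc'pos
    intro w hw
    rcases h with h | h
    · exact absurd h hne0
    · exact h w hw
  rcases eq_or_ne (Polynomial.aeval z T : ℂ) 0 with hT0 | hT0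
  · apply him
    apply key 1 one_pos z
    simp only [map_add, map_mul, Polynomial.aeval_C, map_one]
    rw [hzroot, hT0]
    ring
  · set φ : ℂ → ℂ := fun w => -(Polynomial.aeval w g) / (Polynomial.aeval w T) with hφ
    have hφz : φ z = 0 := by
      rw [hφ]
      simp only
      rw [hzroot]
      rw [neg_zero, zero_div]
    have hana : AnalyticAt ℂ φ z := by
      apply AnalyticAt.div
      · exact ((analyticAt_id (𝕜 := ℂ)).aeval_polynomial g).neg
      · exact (analyticAt_id (𝕜 := ℂ)).aeval_polynomial T
      · exact hT0
    rcases hana.eventually_constant_or_nhds_le_map_nhds with hconst | hopen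
    · exfalso
      have hgne : g ≠ 0 := pair_ne_zero (f i) (f j) (hlead i) (hlead j) hc hd
      have hfin : {w : ℂ | Polynomial.aeval w g = 0}.Finite := by
        have hset : {w : ℂ | Polynomial.aeval w g = 0}
            = {w : ℂ | (g.map (algebraMap ℝ ℂ)).IsRoot w} := by
          ext w
          simp only [Set.mem_setOf_eq, Polynomial.IsRoot, Polynomial.aeval_def, Polynomial.eval₂_eq_eval_map]
        rw [hset]
        apply Polynomial.finite_setOf_isRoot
        rw [Ne, Polynomial.map_eq_zero_iff (algebraMap ℝ ℂ).injective]
        exact hgne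
      have hT0' : ∀ᶠ w in nhds z, (Polynomial.aeval w T : ℂ) ≠ 0 := by
        have hopen' : IsOpen {w : ℂ | (Polynomial.aeval w T : ℂ) ≠ 0} := by
          have : {w : ℂ | (Polynomial.aeval w T : ℂ) ≠ 0}
              = (fun w => (Polynomial.aeval w T : ℂ)) ⁻¹' {(0:ℂ)}ᶜ := rfl
          rw [this]
          exact isOpen_compl_singleton.preimage (T.continuous_aeval)
        exact hopen'.mem_nhds hT0
      have hroots : ∀ᶠ w in nhds z, (Polynomial.aeval w g : ℂ) = 0 := by
        filter_upwards [hconst, hT0'] with w h1 h2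
        rw [hφz, hφ] at h1
        simp only at h1
        rw [_root_.div_eq_zero_iff] at h1
        rcases h1 with h1 | h1
        · exact neg_eq_zero.1 h1
        · exact absurd h1 h2
      have hinf : {w : ℂ | (Polynomial.aeval w g : ℂ) = 0}.Infinite :=
        infinite_of_mem_nhds z hroots
      exact hinf hfin
    · have hS : {w : ℂ | w.im ≠ 0} ∈ nhds z := by
        have hopen' : IsOpen {w : ℂ | w.im ≠ 0} := by
          have : {w : ℂ | w.im ≠ 0} = Complex.im ⁻¹' {(0:ℝ)}ᶜ := rfl
          rw [this]
          exact isOpen_compl_singleton.preimage Complex.continuous_im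
        exact hopen'.mem_nhds him
      have himg : φ '' {w : ℂ | w.im ≠ 0} ∈ nhds (0:ℂ) := by
        rw [← hφz]
        apply hopen
        exact Filter.image_mem_map hS
      obtain ⟨ε, hε, hball⟩ := Metric.mem_nhds_iff.1 himg
      have hmem : ((ε/2 : ℝ) : ℂ) ∈ Metric.ball (0:ℂ) ε := by
        simp only [Metric.mem_ball, dist_zero_right, Complex.norm_real, Real.norm_eq_abs]
        rw [abs_of_pos (by linarith)]
        linarith
      obtain ⟨w, hwim, hweq⟩ := hball hmem
      have hTw : (Polynomial.aeval w T : ℂ) ≠ 0 := by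
        intro h0
        rw [hφ] at hweq
        simp only [h0, div_zero] at hweq
        have : (ε/2 : ℝ) = 0 := by exact_mod_cast hweq.symm
        linarith
      have hwroot : Polynomial.aeval w (Polynomial.C (ε/2) * T + g) = 0 := by
        simp only [map_add, map_mul, Polynomial.aeval_C]
        have : -(Polynomial.aeval w g : ℂ) / (Polynomial.aeval w T) = ((ε/2 : ℝ) : ℂ) := hweq
        field_simp at this
        rw [show ((algebraMap ℝ ℂ) (ε/2)) = ((ε/2 : ℝ) : ℂ) by simp]
        push_cast at this ⊢
        linear_combination (-1 : ℂ) * this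
      exact hwim (key (ε/2) (by linarith) w hwroot)

end CSaux

/-- Chudnovsky–Seymour: polynomials with positive leading coefficients are
pairwise compatible if and only if they are compatible. -/
theorem stmt1 {n : ℕ} (f : Fin n → Polynomial ℝ)
    (hlead : ∀ i, 0 < (f i).leadingCoeff) :
    (∀ i j : Fin n, CompatiblePair (f i) (f j)) ↔ Compatible f :=
  ⟨fun h => CSaux.forward f hlead h, fun h i j => CSaux.backward f hlead h i j⟩
end

section
/- For any entries a, b ∈ {0, 1, x}, neither of the 2 × 2 matrices [[x, a], [1, b]] nor [[a, x], [b, 1]] (i.e., any 2 × 2 matrix over {0, 1, x} having a column equal to (x, 1)ᵀ) maps F₂⁺ to F₂⁺. -/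
open Polynomial Finset

/-- The real roots of `f`, with multiplicity, listed in decreasing order. -/
noncomputable def rootsDesc (f : Polynomial ℝ) : List ℝ :=
  f.roots.sort (· ≥ ·)

/-- The chain condition `⋯ ≤ α₂ ≤ β₂ ≤ α₁ ≤ β₁` on the decreasingly ordered
roots of `f` and `g` (`α` the roots of `f`, `β` those of `g`; here 0-indexed). -/
def RootsInterleave (f g : Polynomial ℝ) : Prop :=
  (∀ (i : ℕ) (h1 : i < (rootsDesc f).length) (h2 : i < (rootsDesc g).length),
      (rootsDesc f).get ⟨i, h1⟩ ≤ (rootsDesc g).get ⟨i, h2⟩) ∧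
  (∀ (i : ℕ) (h1 : i < (rootsDesc f).length) (h2 : i + 1 < (rootsDesc g).length),
      (rootsDesc g).get ⟨i + 1, h2⟩ ≤ (rootsDesc f).get ⟨i, h1⟩)

/-- `Interleaver f g` means `f ≪ g`: both are real-rooted and either one of them is `0`
(the convention `f ≪ 0`, `0 ≪ f`), or both have positive leading coefficients and
their roots interleave as `⋯ ≤ α₂ ≤ β₂ ≤ α₁ ≤ β₁`. -/
def Interleaver (f g : Polynomial ℝ) : Prop :=
  RealRooted f ∧ RealRooted g ∧
    (f = 0 ∨ g = 0 ∨
      (0 < f.leadingCoeff ∧ 0 < g.leadingCoeff ∧ RootsInterleave f g))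

/-- A sequence of real-rooted polynomials is interlacing if `f i ≪ f j` whenever `i < j`. -/
def IsInterlacingSeq {n : ℕ} (f : Fin n → Polynomial ℝ) : Prop :=
  (∀ i, RealRooted (f i)) ∧ ∀ i j : Fin n, i < j → Interleaver (f i) (f j)

/-- Membership in `F_n⁺`: interlacing sequences all of whose members have
nonnegative coefficients. -/
def MemFPlus {n : ℕ} (f : Fin n → Polynomial ℝ) : Prop :=
  IsInterlacingSeq f ∧ ∀ (i : Fin n) (k : ℕ), 0 ≤ (f i).coeff k

/-- An `m × n` matrix `G` of polynomials maps `F_n⁺` to `F_m⁺` if for every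
`(f₁, …, f_n) ∈ F_n⁺` the sequence `(g₁, …, g_m)` with `g_k = ∑ i, G k i * f i`
belongs to `F_m⁺`. -/
def MapsFPlus {m n : ℕ} (G : Matrix (Fin m) (Fin n) (Polynomial ℝ)) : Prop :=
  ∀ f : Fin n → Polynomial ℝ, MemFPlus f → MemFPlus fun k => ∑ i, G k i * f i

-- AUX
lemma rr_p : RealRooted (X + C (2:ℝ)) := by
  refine Or.inr fun z hz => ?_
  simp only [map_add, aeval_X, aeval_C, Complex.coe_algebraMap] at hz
  have : z = -((2:ℝ):ℂ) := by linear_combination hz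
  simp [this]

lemma mem_input : MemFPlus ![X + C (2:ℝ), 0] := by
  refine ⟨⟨?_, ?_⟩, ?_⟩
  · intro i; fin_cases i
    · exact rr_p
    · exact Or.inl rfl
  · intro i j hij; fin_cases i <;> fin_cases j <;> simp_all
    exact ⟨rr_p, Or.inl rfl, Or.inr (Or.inl rfl)⟩
  · intro i k; fin_cases i <;> simp [coeff_add, coeff_X, coeff_C]
    split_ifs <;> norm_num

lemma mem_input' : MemFPlus ![0, X + C (2:ℝ)] := by
  refine ⟨⟨?_, ?_⟩, ?_⟩
  · intro i; fin_cases i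
    · exact Or.inl rfl
    · exact rr_p
  · intro i j hij; fin_cases i <;> fin_cases j <;> simp_all
    exact ⟨Or.inl rfl, rr_p, Or.inl rfl⟩
  · intro i k; fin_cases i <;> simp [coeff_add, coeff_X, coeff_C]
    split_ifs <;> norm_num

lemma roots_p : (X + C (2:ℝ)).roots = {-2} := by
  have : (X + C (2:ℝ)) = X - C (-2) := by push_cast [map_neg]; ring
  rw [this, roots_X_sub_C]

lemma rootsDesc_g1 : rootsDesc (X * (X + C (2:ℝ))) = [0, -2] := by
  unfold rootsDesc
  rw [roots_mul (mul_ne_zero X_ne_zero (X_add_C_ne_zero 2)), roots_X, roots_p]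
  apply List.Perm.eq_of_pairwise' (Multiset.pairwise_sort _ _) ?_ (Multiset.coe_eq_coe.mp ?_)
  · exact List.pairwise_cons.mpr ⟨by norm_num, List.pairwise_singleton _ _⟩
  · rw [Multiset.sort_eq]; rfl

lemma rootsDesc_g2 : rootsDesc (X + C (2:ℝ)) = [-2] := by
  unfold rootsDesc
  rw [roots_p]
  apply List.Perm.eq_of_pairwise' (Multiset.pairwise_sort _ _) ?_ (Multiset.coe_eq_coe.mp ?_)
  · exact List.pairwise_singleton _ _
  · rw [Multiset.sort_eq]; rfl

lemma not_inter : ¬ Interleaver (X * (X + C (2:ℝ))) (X + C (2:ℝ)) := by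
  rintro ⟨-, -, h | h | ⟨-, -, hRI, -⟩⟩
  · exact mul_ne_zero X_ne_zero (X_add_C_ne_zero 2) h
  · exact X_add_C_ne_zero 2 h
  · have := hRI 0 (by rw [rootsDesc_g1]; norm_num) (by rw [rootsDesc_g2]; norm_num)
    rw [List.get_eq_getElem, List.get_eq_getElem] at this
    simp only [rootsDesc_g1, rootsDesc_g2] at this
    norm_num at this


/-- No `2 × 2` matrix over `{0, 1, x}` having a column equal to `(x, 1)ᵀ` maps
`F₂⁺` to `F₂⁺`. -/
theorem stmt11 (a b : Polynomial ℝ)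
    (ha : a = 0 ∨ a = 1 ∨ a = Polynomial.X) (hb : b = 0 ∨ b = 1 ∨ b = Polynomial.X) :
    ¬ MapsFPlus (!![Polynomial.X, a; 1, b] : Matrix (Fin 2) (Fin 2) (Polynomial ℝ)) ∧
    ¬ MapsFPlus (!![a, Polynomial.X; b, 1] : Matrix (Fin 2) (Fin 2) (Polynomial ℝ)) := by
  constructor
  · intro h
    have := (h _ mem_input).1.2 0 1 (by decide)
    simp [Fin.sum_univ_two, Matrix.cons_val_zero, Matrix.cons_val_one] at this
    exact not_inter this
  · intro h
    have := (h _ mem_input').1.2 0 1 (by decide)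
    simp [Fin.sum_univ_two, Matrix.cons_val_zero, Matrix.cons_val_one] at this
    exact not_inter this
end

section
/- For any entries a, b ∈ {0, 1, x}, neither of the 2 × 2 matrices [[1, x], [a, b]] nor [[a, b], [1, x]] (i.e., any 2 × 2 matrix over {0, 1, x} having a row equal to (1, x)) maps F₂⁺ to F₂⁺. -/
open Polynomial Finset

lemma realRooted_one : RealRooted (1 : Polynomial ℝ) := by
  right; intro z h; simp at h

lemma realRooted_X : RealRooted (Polynomial.X : Polynomial ℝ) := by
  right; intro z h; simp at h; simp [h]

lemma memFPlus_witness : MemFPlus (![1, Polynomial.X] : Fin 2 → Polynomial ℝ) := by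
  have hR : ∀ i : Fin 2, RealRooted (![1, Polynomial.X] i) := by
    intro i
    fin_cases i
    · exact realRooted_one
    · exact realRooted_X
  refine ⟨⟨hR, ?_⟩, ?_⟩
  · intro i j hij
    refine ⟨hR i, hR j, Or.inr (Or.inr ?_)⟩
    fin_cases i <;> fin_cases j <;> simp_all [RootsInterleave] <;>
      constructor <;> intro k h1 h2 <;> simp [rootsDesc] at h1
  · intro i k
    fin_cases i <;> simp [Polynomial.coeff_one, Polynomial.coeff_X] <;> split <;> norm_num

lemma not_realRooted : ¬ RealRooted ((1 : Polynomial ℝ) + Polynomial.X * Polynomial.X) := by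
  intro h
  rcases h with h | h
  · have := congrArg (fun p => Polynomial.coeff p 0) h
    simp at this
  · have := h Complex.I (by simp [Complex.I_sq])
    simp at this

/-- No `2 × 2` matrix over `{0, 1, x}` having a row equal to `(1, x)` maps
`F₂⁺` to `F₂⁺`. -/
theorem stmt12 (a b : Polynomial ℝ)
    (ha : a = 0 ∨ a = 1 ∨ a = Polynomial.X) (hb : b = 0 ∨ b = 1 ∨ b = Polynomial.X) :
    ¬ MapsFPlus (!![1, Polynomial.X; a, b] : Matrix (Fin 2) (Fin 2) (Polynomial ℝ)) ∧
    ¬ MapsFPlus (!![a, b; 1, Polynomial.X] : Matrix (Fin 2) (Fin 2) (Polynomial ℝ)) := by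
  constructor
  · intro H
    have h := (H _ memFPlus_witness).1.1 0
    simp [Fin.sum_univ_two] at h
    exact not_realRooted h
  · intro H
    have h := (H _ memFPlus_witness).1.1 1
    simp [Fin.sum_univ_two] at h
    exact not_realRooted h
end

section
/- If a 2 × 2 matrix G has all entries in {0, 1} and negative determinant, then G does not map F₂⁺ to F₂⁺; likewise, if G = x·G' where G' is a 2 × 2 matrix with all entries in {0, 1} and negative determinant, then G does not map F₂⁺ to F₂⁺. -/
open Polynomial Finset

/- ==================== auxiliary lemmas ==================== -/

lemma rootsDesc_eq_of {f : Polynomial ℝ} {l : List ℝ}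
    (h : f.roots = ↑l) (hs : l.Pairwise (· ≥ ·)) : rootsDesc f = l := by
  have h1 : List.Pairwise (· ≥ ·) (rootsDesc f) := Multiset.pairwise_sort _ _
  have h2 : (↑(rootsDesc f) : Multiset ℝ) = ↑l := by
    rw [rootsDesc, Multiset.sort_eq, h]
  exact List.Perm.eq_of_pairwise' h1 hs (Multiset.coe_eq_coe.mp h2)

lemma aux_X1_eq : (X + 1 : ℝ[X]) = X - C (-1) := by simp

lemma aux_twoX1_eq : (2 * X + 1 : ℝ[X]) = C 2 * (X - C (-(1/2))) := by
  rw [mul_sub, ← C_mul]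
  norm_num
  simp [map_ofNat]

lemma aux_X1_ne : (X + 1 : ℝ[X]) ≠ 0 := fun h => by simpa using congrArg (eval 0) h
lemma aux_twoX1_ne : (2 * X + 1 : ℝ[X]) ≠ 0 := fun h => by simpa using congrArg (eval 0) h

lemma rd_X : rootsDesc (X : ℝ[X]) = [0] :=
  rootsDesc_eq_of (by rw [roots_X]; rfl) (by simp)

lemma rd_X1 : rootsDesc (X + 1 : ℝ[X]) = [-1] :=
  rootsDesc_eq_of (by rw [aux_X1_eq, roots_X_sub_C]; rfl) (by simp)

lemma rd_twoX1 : rootsDesc (2 * X + 1 : ℝ[X]) = [-(1/2)] :=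
  rootsDesc_eq_of (by rw [aux_twoX1_eq, roots_C_mul _ (two_ne_zero), roots_X_sub_C]; rfl)
    (by simp)

lemma rd_XX : rootsDesc (X * X : ℝ[X]) = [0, 0] :=
  rootsDesc_eq_of (by rw [roots_mul (mul_ne_zero X_ne_zero X_ne_zero), roots_X]; rfl) (by simp)

lemma rd_XX1 : rootsDesc (X * (X + 1) : ℝ[X]) = [0, -1] :=
  rootsDesc_eq_of
    (by rw [roots_mul (mul_ne_zero X_ne_zero aux_X1_ne), roots_X, aux_X1_eq, roots_X_sub_C]; rfl)
    (by norm_num)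

lemma rd_XtwoX1 : rootsDesc (X * (2 * X + 1) : ℝ[X]) = [0, -(1/2)] :=
  rootsDesc_eq_of (by rw [roots_mul (mul_ne_zero X_ne_zero aux_twoX1_ne), roots_X, aux_twoX1_eq,
    roots_C_mul _ (two_ne_zero), roots_X_sub_C]; rfl) (by norm_num)

lemma lc_X1 : (X + 1 : ℝ[X]).leadingCoeff = 1 := by
  have := monic_X_add_C (1 : ℝ); rw [C_1] at this; exact this

/-- Refute `Interleaver` from a strict violation of the first chain condition at index `i`. -/
lemma not_interleaver {p q : Polynomial ℝ} {lp lq : List ℝ}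
    (hp : p ≠ 0) (hq : q ≠ 0) (hlp : rootsDesc p = lp) (hlq : rootsDesc q = lq)
    (i : ℕ) (h1 : i < lp.length) (h2 : i < lq.length)
    (hgt : lq.get ⟨i, h2⟩ < lp.get ⟨i, h1⟩) : ¬ Interleaver p q := by
  rintro ⟨-, -, h | h | ⟨-, -, hI, -⟩⟩
  · exact hp h
  · exact hq h
  · subst hlp; subst hlq
    exact absurd (hI i h1 h2) (not_le.mpr hgt)

lemma rr_X : RealRooted (X : ℝ[X]) := by
  refine Or.inr fun z hz => ?_
  simp only [aeval_X] at hz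
  simp [hz]

lemma rr_X1 : RealRooted (X + 1 : ℝ[X]) := by
  refine Or.inr fun z hz => ?_
  simp only [map_add, aeval_X, map_one] at hz
  have : z = -1 := by linear_combination hz
  simp [this]

lemma il_X1_X : Interleaver (X + 1 : ℝ[X]) X := by
  refine ⟨rr_X1, rr_X, Or.inr (Or.inr ⟨?_, ?_, ?_, ?_⟩)⟩
  · rw [lc_X1]; norm_num
  · rw [leadingCoeff_X]; norm_num
  · intro i h1 h2
    rw [rd_X1] at h1
    have : i = 0 := by simpa using h1
    subst this
    simp [rd_X1, rd_X]
  · intro i h1 h2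
    rw [rd_X] at h2
    simp at h2

/-- The witness sequence `(X + 1, X)` lies in `F₂⁺`. -/
lemma mem_witness : MemFPlus ![X + 1, X] := by
  refine ⟨⟨?_, ?_⟩, ?_⟩
  · intro i; fin_cases i
    · exact rr_X1
    · exact rr_X
  · intro i j hij
    fin_cases i <;> fin_cases j <;>
      first
      | exact absurd hij (by decide)
      | exact il_X1_X
  · intro i k
    fin_cases i <;> simp [coeff_add, coeff_X, coeff_one] <;> split_ifs <;> norm_num

/-- A `2 × 2` zero-one matrix with negative determinant fails to map `F₂⁺` to `F₂⁺`,
and so does `x` times such a matrix. -/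
theorem stmt14 (G : Matrix (Fin 2) (Fin 2) ℝ)
    (hval : ∀ i j, G i j = 0 ∨ G i j = 1) (hdet : G.det < 0) :
    ¬ MapsFPlus (G.map Polynomial.C) ∧
      ¬ MapsFPlus (Matrix.of fun i j => Polynomial.X * Polynomial.C (G i j)) := by
  rw [Matrix.det_fin_two] at hdet
  rcases hval 0 0 with h00 | h00 <;> rcases hval 0 1 with h01 | h01 <;>
    rcases hval 1 0 with h10 | h10 <;> rcases hval 1 1 with h11 | h11 <;>
    rw [h00, h01, h10, h11] at hdet <;> try norm_num at hdet
  all_goals constructor <;> intro hmap <;>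
    have key := (hmap ![X + 1, X] mem_witness).1.2 0 1 (by norm_num)
  all_goals
    simp only [Fin.sum_univ_two, Matrix.map_apply, Matrix.of_apply,
      Matrix.cons_val_zero, Matrix.cons_val_one, Matrix.head_cons,
      h00, h01, h10, h11, map_zero, map_one, zero_mul, one_mul, mul_zero, mul_one,
      zero_add, add_zero] at key
  -- case G = !![0,1;1,0]
  · exact not_interleaver X_ne_zero aux_X1_ne rd_X rd_X1 0 (by norm_num) (by norm_num)
      (by norm_num) key
  · exact not_interleaver (mul_ne_zero X_ne_zero X_ne_zero)
      (mul_ne_zero X_ne_zero aux_X1_ne) rd_XX rd_XX1 1 (by norm_num) (by norm_num)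
      (by norm_num) key
  -- case G = !![0,1;1,1]
  · have e : (X + 1 + X : ℝ[X]) = 2 * X + 1 := by ring
    rw [e] at key
    exact not_interleaver X_ne_zero aux_twoX1_ne rd_X rd_twoX1 0 (by norm_num) (by norm_num)
      (by norm_num) key
  · have e : (X * (X + 1) + X * X : ℝ[X]) = X * (2 * X + 1) := by ring
    rw [e] at key
    exact not_interleaver (mul_ne_zero X_ne_zero X_ne_zero)
      (mul_ne_zero X_ne_zero aux_twoX1_ne) rd_XX rd_XtwoX1 1 (by norm_num) (by norm_num)
      (by norm_num) key
  -- case G = !![1,1;1,0]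
  · have e : (X + 1 + X : ℝ[X]) = 2 * X + 1 := by ring
    rw [e] at key
    exact not_interleaver aux_twoX1_ne aux_X1_ne rd_twoX1 rd_X1 0 (by norm_num) (by norm_num)
      (by norm_num) key
  · have e : (X * (X + 1) + X * X : ℝ[X]) = X * (2 * X + 1) := by ring
    rw [e] at key
    exact not_interleaver (mul_ne_zero X_ne_zero aux_twoX1_ne)
      (mul_ne_zero X_ne_zero aux_X1_ne) rd_XtwoX1 rd_XX1 1 (by norm_num) (by norm_num)
      (by norm_num) key
end

section
/- Let n ≥ 1 and r ≥ 2 be integers and let γ = (γ₀, …, γ_{r−1}) be an integer sequence with 0 ≤ γ_i ≤ r−2 for all 0 ≤ i ≤ r−1 and |γ_{i+1} − γ_i| ≤ 1 for all 0 ≤ i ≤ r−2. Then the polynomial Σ_{w ∈ SW_γ(n,r)} x^{asc(w)} is real-rooted. -/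
open Polynomial Finset

/-- The number of ascents of a word `w = (w₀, …, w_n)`: indices `i ∈ {0, …, n-1}`
with `w_i < w_{i+1}`. -/
def asc {n r : ℕ} (w : Fin (n + 1) → Fin r) : ℕ :=
  (Finset.univ.filter fun j : Fin n => w j.castSucc < w j.succ).card

namespace SW16
variable {r : ℕ}

def Adm (γ : Fin r → ℤ) (i j : Fin r) : Prop := γ i < |((i : ℕ) : ℤ) - ((j : ℕ) : ℤ)|

instance (γ : Fin r → ℤ) (i : Fin r) : DecidablePred (Adm γ i) := fun j => by
  unfold Adm; infer_instance

def Good (γ : Fin r → ℤ) {m : ℕ} (w : Fin (m+1) → Fin r) : Prop :=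
  ((w 0 : ℕ) = 0) ∧ ∀ j : Fin m, Adm γ (w j.succ) (w j.castSucc)

instance (γ : Fin r → ℤ) {m : ℕ} (w : Fin (m+1) → Fin r) : Decidable (Good γ w) := by
  unfold Good; infer_instance

noncomputable def Vv (γ : Fin r → ℤ) (z : ℂ) : ℕ → Fin r → ℂ
  | 0 => fun i => if (i : ℕ) = 0 then 1 else 0
  | m+1 => fun i => ∑ j ∈ univ.filter (Adm γ i), (if j < i then z else 1) * Vv γ z m j
section analytic
variable (z : ℂ) (v : Fin r → ℂ)

def Inv1 : Prop := ∀ a b : Fin r, a ≤ b → 0 ≤ (v b * (starRingEnd ℂ) (v a)).im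
def Inv2 : Prop := ∀ a b : Fin r, a ≤ b → 0 ≤ (z * (v a * (starRingEnd ℂ) (v b))).im

lemma bl1 (h1 : Inv1 v) (P Q : Fin r → Prop) [DecidablePred P] [DecidablePred Q]
    (h : ∀ a b, P a → Q b → a ≤ b) :
    0 ≤ ((∑ j ∈ univ.filter Q, v j) * (starRingEnd ℂ) (∑ j ∈ univ.filter P, v j)).im := by
  rw [map_sum, Finset.sum_mul_sum, Complex.im_sum]
  refine Finset.sum_nonneg fun b hb => ?_
  rw [Complex.im_sum]
  refine Finset.sum_nonneg fun a ha => ?_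
  exact h1 a b (h a b (Finset.mem_filter.1 ha).2 (Finset.mem_filter.1 hb).2)

lemma bl2 (h2 : Inv2 z v) (P Q : Fin r → Prop) [DecidablePred P] [DecidablePred Q]
    (h : ∀ a b, P a → Q b → a ≤ b) :
    0 ≤ (z * ((∑ j ∈ univ.filter P, v j) * (starRingEnd ℂ) (∑ j ∈ univ.filter Q, v j))).im := by
  rw [map_sum, Finset.sum_mul_sum, Finset.mul_sum, Complex.im_sum]
  refine Finset.sum_nonneg fun a ha => ?_
  rw [Finset.mul_sum, Complex.im_sum]
  refine Finset.sum_nonneg fun b hb => ?_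
  exact h2 a b (h a b (Finset.mem_filter.1 ha).2 (Finset.mem_filter.1 hb).2)

lemma im_mul_conj_self (x : ℂ) : (x * (starRingEnd ℂ) x).im = 0 := by
  simp [Complex.mul_conj]

lemma im_z_mul_conj_self (hz : 0 ≤ z.im) (x : ℂ) : 0 ≤ (z * (x * (starRingEnd ℂ) x)).im := by
  rw [Complex.mul_conj]
  simp only [Complex.mul_im, Complex.ofReal_re, Complex.ofReal_im, mul_zero, zero_add]
  exact mul_nonneg hz (Complex.normSq_nonneg x)

lemma nsq_mul_im_nonneg (w : ℂ) (h : 0 ≤ w.im) : 0 ≤ ((z * (starRingEnd ℂ) z) * w).im := by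
  rw [Complex.mul_conj]
  simp only [Complex.mul_im, Complex.ofReal_re, Complex.ofReal_im, zero_mul, add_zero]
  exact mul_nonneg (Complex.normSq_nonneg z) h

/-- The core two inequalities for a pair of rows with staircase data. -/
lemma core (hz : 0 < z.im) (h1 : Inv1 v) (h2 : Inv2 z v)
    (p q p' q' : ℤ) (hpp' : p ≤ p') (hqq' : q ≤ q') (hpq : p ≤ q + 1) (hp'q' : p' ≤ q' + 1) :
    0 ≤ (((z * ∑ j ∈ univ.filter (fun j : Fin r => ((j : ℕ) : ℤ) < p'), v j)
            + ∑ j ∈ univ.filter (fun j : Fin r => q' < ((j : ℕ) : ℤ)), v j)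
          * (starRingEnd ℂ) ((z * ∑ j ∈ univ.filter (fun j : Fin r => ((j : ℕ) : ℤ) < p), v j)
            + ∑ j ∈ univ.filter (fun j : Fin r => q < ((j : ℕ) : ℤ)), v j)).im
    ∧ 0 ≤ (z * (((z * ∑ j ∈ univ.filter (fun j : Fin r => ((j : ℕ) : ℤ) < p), v j)
            + ∑ j ∈ univ.filter (fun j : Fin r => q < ((j : ℕ) : ℤ)), v j)
          * (starRingEnd ℂ) ((z * ∑ j ∈ univ.filter (fun j : Fin r => ((j : ℕ) : ℤ) < p'), v j)
            + ∑ j ∈ univ.filter (fun j : Fin r => q' < ((j : ℕ) : ℤ)), v j))).im := by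
  set C1 : Fin r → Prop := fun j => ((j : ℕ) : ℤ) < p with hC1
  set C2 : Fin r → Prop := fun j => p ≤ ((j : ℕ) : ℤ) ∧ ((j : ℕ) : ℤ) ≤ q ∧ ((j : ℕ) : ℤ) < p' with hC2
  set C3 : Fin r → Prop := fun j => q < ((j : ℕ) : ℤ) ∧ ((j : ℕ) : ℤ) < p' with hC3
  set C4 : Fin r → Prop := fun j => q < ((j : ℕ) : ℤ) ∧ p' ≤ ((j : ℕ) : ℤ) ∧ ((j : ℕ) : ℤ) ≤ q' with hC4
  set C5 : Fin r → Prop := fun j => q' < ((j : ℕ) : ℤ) with hC5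
  set s1 := ∑ j ∈ univ.filter C1, v j with hs1
  set s2 := ∑ j ∈ univ.filter C2, v j with hs2
  set s3 := ∑ j ∈ univ.filter C3, v j with hs3
  set s4 := ∑ j ∈ univ.filter C4, v j with hs4
  set s5 := ∑ j ∈ univ.filter C5, v j with hs5
  have hT : (∑ j ∈ univ.filter (fun j : Fin r => q < ((j : ℕ) : ℤ)), v j) = s3 + s4 + s5 := by
    rw [hs3, hs4, hs5, ← Finset.sum_union, ← Finset.sum_union]
    · apply Finset.sum_congr _ (fun _ _ => rfl)
      ext j
      simp only [Finset.mem_filter, Finset.mem_union, Finset.mem_univ, true_and, hC3, hC4, hC5]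
      omega
    · rw [Finset.disjoint_left]
      intro j hj hj'
      simp only [Finset.mem_filter, Finset.mem_union, Finset.mem_univ, true_and, hC3, hC4, hC5] at hj hj'
      omega
    · rw [Finset.disjoint_left]
      intro j hj hj'
      simp only [Finset.mem_filter, Finset.mem_univ, true_and, hC3, hC4] at hj hj'
      omega
  have hS' : (∑ j ∈ univ.filter (fun j : Fin r => ((j : ℕ) : ℤ) < p'), v j) = s1 + s2 + s3 := by
    rw [hs1, hs2, hs3, ← Finset.sum_union, ← Finset.sum_union]
    · apply Finset.sum_congr _ (fun _ _ => rfl)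
      ext j
      simp only [Finset.mem_filter, Finset.mem_union, Finset.mem_univ, true_and, hC1, hC2, hC3]
      omega
    · rw [Finset.disjoint_left]
      intro j hj hj'
      simp only [Finset.mem_filter, Finset.mem_union, Finset.mem_univ, true_and, hC1, hC2, hC3] at hj hj'
      omega
    · rw [Finset.disjoint_left]
      intro j hj hj'
      simp only [Finset.mem_filter, Finset.mem_univ, true_and, hC1, hC2] at hj hj'
      omega
  rw [hT, hS']
  have B1 : ∀ (X Y : Fin r → Prop) (_ : DecidablePred X) (_ : DecidablePred Y),
      (∀ a b, X a → Y b → a ≤ b) →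
      0 ≤ ((∑ j ∈ univ.filter Y, v j) * (starRingEnd ℂ) (∑ j ∈ univ.filter X, v j)).im :=
    fun X Y _ _ h => bl1 v h1 X Y h
  have B2 : ∀ (X Y : Fin r → Prop) (_ : DecidablePred X) (_ : DecidablePred Y),
      (∀ a b, X a → Y b → a ≤ b) →
      0 ≤ (z * ((∑ j ∈ univ.filter X, v j) * (starRingEnd ℂ) (∑ j ∈ univ.filter Y, v j))).im :=
    fun X Y _ _ h => bl2 z v h2 X Y h
  have o12 : ∀ a b : Fin r, C1 a → C2 b → a ≤ b := by
    intro a b ha hb; simp only [hC1, hC2] at ha hb; rw [Fin.le_def]; omega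
  have o13 : ∀ a b : Fin r, C1 a → C3 b → a ≤ b := by
    intro a b ha hb; simp only [hC1, hC3] at ha hb; rw [Fin.le_def]; omega
  have o14 : ∀ a b : Fin r, C1 a → C4 b → a ≤ b := by
    intro a b ha hb; simp only [hC1, hC4] at ha hb; rw [Fin.le_def]; omega
  have o23 : ∀ a b : Fin r, C2 a → C3 b → a ≤ b := by
    intro a b ha hb; simp only [hC2, hC3] at ha hb; rw [Fin.le_def]; omega
  have o24 : ∀ a b : Fin r, C2 a → C4 b → a ≤ b := by
    intro a b ha hb; simp only [hC2, hC4] at ha hb; rw [Fin.le_def]; omega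
  have o25 : ∀ a b : Fin r, C2 a → C5 b → a ≤ b := by
    intro a b ha hb; simp only [hC2, hC5] at ha hb; rw [Fin.le_def]; omega
  have o34 : ∀ a b : Fin r, C3 a → C4 b → a ≤ b := by
    intro a b ha hb; simp only [hC3, hC4] at ha hb; rw [Fin.le_def]; omega
  have o35 : ∀ a b : Fin r, C3 a → C5 b → a ≤ b := by
    intro a b ha hb; simp only [hC3, hC5] at ha hb; rw [Fin.le_def]; omega
  have o45 : ∀ a b : Fin r, C4 a → C5 b → a ≤ b := by
    intro a b ha hb; simp only [hC4, hC5] at ha hb; rw [Fin.le_def]; omega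
  set A := z * s1 + s5 with hA
  set u := z * s2 + z * s3 with hu'
  -- here u is "w" of the informal proof; rename: B := s3 + s4
  set B := s3 + s4 with hB
  have eI : z * s1 + (B + s5) = A + B := by rw [hA, hB]; ring
  have eK : z * (s1 + s2 + s3) + s5 = A + u := by rw [hA, hu']; ring
  rw [eI, eK]
  have hz' := le_of_lt hz
  have hAB : 0 ≤ (A * (starRingEnd ℂ) B).im := by
    have t : A * (starRingEnd ℂ) B = z * (s1 * (starRingEnd ℂ) s3) + (z * (s1 * (starRingEnd ℂ) s4)
        + (s5 * (starRingEnd ℂ) s3 + s5 * (starRingEnd ℂ) s4)) := by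
      rw [hA, hB]; simp only [map_add]; ring
    rw [t]; simp only [Complex.add_im]
    have g1 := B2 _ _ inferInstance inferInstance o13
    have g2 := B2 _ _ inferInstance inferInstance o14
    have g3 := B1 _ _ inferInstance inferInstance o35
    have g4 := B1 _ _ inferInstance inferInstance o45
    simp only [← hs1, ← hs2, ← hs3, ← hs4, ← hs5] at g1 g2 g3 g4
    linarith
  have huA : 0 ≤ (u * (starRingEnd ℂ) A).im := by
    have t : u * (starRingEnd ℂ) A = (z * (starRingEnd ℂ) z) * (s2 * (starRingEnd ℂ) s1)
        + ((z * (starRingEnd ℂ) z) * (s3 * (starRingEnd ℂ) s1)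
        + (z * (s2 * (starRingEnd ℂ) s5) + z * (s3 * (starRingEnd ℂ) s5))) := by
      rw [hA, hu']; simp only [map_add, map_mul]; ring
    rw [t]; simp only [Complex.add_im]
    have g1 := nsq_mul_im_nonneg z (s2 * (starRingEnd ℂ) s1)
      (by have := B1 _ _ inferInstance inferInstance o12; simp only [← hs1, ← hs2, ← hs3, ← hs4, ← hs5] at this; exact this)
    have g2 := nsq_mul_im_nonneg z (s3 * (starRingEnd ℂ) s1)
      (by have := B1 _ _ inferInstance inferInstance o13; simp only [← hs1, ← hs2, ← hs3, ← hs4, ← hs5] at this; exact this)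
    have g3 := B2 _ _ inferInstance inferInstance o25
    have g4 := B2 _ _ inferInstance inferInstance o35
    simp only [← hs1, ← hs2, ← hs3, ← hs4, ← hs5] at g3
    simp only [← hs1, ← hs2, ← hs3, ← hs4, ← hs5] at g4
    linarith
  have huB : 0 ≤ (u * (starRingEnd ℂ) B).im := by
    have t : u * (starRingEnd ℂ) B = z * (s2 * (starRingEnd ℂ) s3) + (z * (s2 * (starRingEnd ℂ) s4)
        + (z * (s3 * (starRingEnd ℂ) s3) + z * (s3 * (starRingEnd ℂ) s4))) := by
      rw [hB, hu']; simp only [map_add]; ring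
    rw [t]; simp only [Complex.add_im]
    have g1 := B2 _ _ inferInstance inferInstance o23
    have g2 := B2 _ _ inferInstance inferInstance o24
    have g3 := im_z_mul_conj_self z hz' s3
    have g4 := B2 _ _ inferInstance inferInstance o34
    simp only [← hs1, ← hs2, ← hs3, ← hs4, ← hs5] at g1
    simp only [← hs1, ← hs2, ← hs3, ← hs4, ← hs5] at g2
    simp only [← hs1, ← hs2, ← hs3, ← hs4, ← hs5] at g4
    linarith
  constructor
  · have expand : (A + u) * (starRingEnd ℂ) (A + B)
        = A * (starRingEnd ℂ) A + (A * (starRingEnd ℂ) B + (u * (starRingEnd ℂ) A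
          + u * (starRingEnd ℂ) B)) := by
      simp only [map_add]; ring
    rw [expand]
    simp only [Complex.add_im, im_mul_conj_self]
    linarith
  · -- 0 ≤ (z * ((A + B) * conj (A + u))).im
    have expand : z * ((A + B) * (starRingEnd ℂ) (A + u))
        = z * (A * (starRingEnd ℂ) A) + (z * (A * (starRingEnd ℂ) u)
          + (z * (B * (starRingEnd ℂ) A) + z * (B * (starRingEnd ℂ) u))) := by
      simp only [map_add]; ring
    rw [expand]
    simp only [Complex.add_im]
    have gAA := im_z_mul_conj_self z hz' A
    have gAu : 0 ≤ (z * (A * (starRingEnd ℂ) u)).im := by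
      have t : z * (A * (starRingEnd ℂ) u)
          = (z * (starRingEnd ℂ) z) * (z * (s1 * (starRingEnd ℂ) s2))
          + ((z * (starRingEnd ℂ) z) * (z * (s1 * (starRingEnd ℂ) s3))
          + ((z * (starRingEnd ℂ) z) * (s5 * (starRingEnd ℂ) s2)
          + (z * (starRingEnd ℂ) z) * (s5 * (starRingEnd ℂ) s3))) := by
        rw [hA, hu']; simp only [map_add, map_mul]; ring
      rw [t]; simp only [Complex.add_im]
      have g1 := nsq_mul_im_nonneg z _ (by
        have := B2 _ _ inferInstance inferInstance o12; simp only [← hs1, ← hs2, ← hs3, ← hs4, ← hs5] at this; exact this)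
      have g2 := nsq_mul_im_nonneg z _ (by
        have := B2 _ _ inferInstance inferInstance o13; simp only [← hs1, ← hs2, ← hs3, ← hs4, ← hs5] at this; exact this)
      have g3 := nsq_mul_im_nonneg z (s5 * (starRingEnd ℂ) s2)
        (by have := B1 _ _ inferInstance inferInstance o25; simp only [← hs1, ← hs2, ← hs3, ← hs4, ← hs5] at this; exact this)
      have g4 := nsq_mul_im_nonneg z (s5 * (starRingEnd ℂ) s3)
        (by have := B1 _ _ inferInstance inferInstance o35; simp only [← hs1, ← hs2, ← hs3, ← hs4, ← hs5] at this; exact this)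
      linarith
    have gBA : 0 ≤ (z * (B * (starRingEnd ℂ) A)).im := by
      have t : z * (B * (starRingEnd ℂ) A)
          = (z * (starRingEnd ℂ) z) * (s3 * (starRingEnd ℂ) s1)
          + ((z * (starRingEnd ℂ) z) * (s4 * (starRingEnd ℂ) s1)
          + (z * (s3 * (starRingEnd ℂ) s5) + z * (s4 * (starRingEnd ℂ) s5))) := by
        rw [hA, hB]; simp only [map_add, map_mul]; ring
      rw [t]; simp only [Complex.add_im]
      have g1 := nsq_mul_im_nonneg z (s3 * (starRingEnd ℂ) s1)
        (by have := B1 _ _ inferInstance inferInstance o13; simp only [← hs1, ← hs2, ← hs3, ← hs4, ← hs5] at this; exact this)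
      have g2 := nsq_mul_im_nonneg z (s4 * (starRingEnd ℂ) s1)
        (by have := B1 _ _ inferInstance inferInstance o14; simp only [← hs1, ← hs2, ← hs3, ← hs4, ← hs5] at this; exact this)
      have g3 := B2 _ _ inferInstance inferInstance o35
      have g4 := B2 _ _ inferInstance inferInstance o45
      simp only [← hs1, ← hs2, ← hs3, ← hs4, ← hs5] at g3
      simp only [← hs1, ← hs2, ← hs3, ← hs4, ← hs5] at g4
      linarith
    have gBu : 0 ≤ (z * (B * (starRingEnd ℂ) u)).im := by
      have t : z * (B * (starRingEnd ℂ) u)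
          = (z * (starRingEnd ℂ) z) * (s3 * (starRingEnd ℂ) s2)
          + ((z * (starRingEnd ℂ) z) * (s3 * (starRingEnd ℂ) s3)
          + ((z * (starRingEnd ℂ) z) * (s4 * (starRingEnd ℂ) s2)
          + (z * (starRingEnd ℂ) z) * (s4 * (starRingEnd ℂ) s3))) := by
        rw [hB, hu']; simp only [map_add, map_mul]; ring
      rw [t]; simp only [Complex.add_im]
      have g1 := nsq_mul_im_nonneg z (s3 * (starRingEnd ℂ) s2)
        (by have := B1 _ _ inferInstance inferInstance o23; simp only [← hs1, ← hs2, ← hs3, ← hs4, ← hs5] at this; exact this)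
      have g2 := nsq_mul_im_nonneg z (s3 * (starRingEnd ℂ) s3)
        (le_of_eq (im_mul_conj_self s3).symm)
      have g3 := nsq_mul_im_nonneg z (s4 * (starRingEnd ℂ) s2)
        (by have := B1 _ _ inferInstance inferInstance o24; simp only [← hs1, ← hs2, ← hs3, ← hs4, ← hs5] at this; exact this)
      have g4 := nsq_mul_im_nonneg z (s4 * (starRingEnd ℂ) s3)
        (by have := B1 _ _ inferInstance inferInstance o34; simp only [← hs1, ← hs2, ← hs3, ← hs4, ← hs5] at this; exact this)
      linarith
    linarith

lemma adm_iff (γ : Fin r → ℤ) (i j : Fin r) :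
    Adm γ i j ↔ (((j : ℕ) : ℤ) < ((i : ℕ) : ℤ) - γ i ∨ ((i : ℕ) : ℤ) + γ i < ((j : ℕ) : ℤ)) := by
  unfold Adm
  rw [lt_abs]
  omega

lemma vsplit (γ : Fin r → ℤ) (i : Fin r) (hγ : 0 ≤ γ i) (f : Fin r → ℂ) :
    ∑ j ∈ univ.filter (Adm γ i), (if j < i then z else 1) * f j
    = z * (∑ j ∈ univ.filter (fun j : Fin r => ((j : ℕ) : ℤ) < ((i : ℕ) : ℤ) - γ i), f j)
      + ∑ j ∈ univ.filter (fun j : Fin r => ((i : ℕ) : ℤ) + γ i < ((j : ℕ) : ℤ)), f j := by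
  have hsplit : univ.filter (Adm γ i)
      = univ.filter (fun j : Fin r => ((j : ℕ) : ℤ) < ((i : ℕ) : ℤ) - γ i)
        ∪ univ.filter (fun j : Fin r => ((i : ℕ) : ℤ) + γ i < ((j : ℕ) : ℤ)) := by
    ext j
    simp only [Finset.mem_filter, Finset.mem_union, Finset.mem_univ, true_and, adm_iff]
  rw [hsplit, Finset.sum_union]
  · congr 1
    · rw [Finset.mul_sum]
      apply Finset.sum_congr rfl
      intro j hj
      simp only [Finset.mem_filter, Finset.mem_univ, true_and] at hj
      rw [if_pos]
      rw [Fin.lt_def]; omega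
    · apply Finset.sum_congr rfl
      intro j hj
      simp only [Finset.mem_filter, Finset.mem_univ, true_and] at hj
      rw [if_neg, one_mul]
      rw [Fin.lt_def]; omega
  · rw [Finset.disjoint_left]
    intro j hj hj'
    simp only [Finset.mem_filter, Finset.mem_univ, true_and] at hj hj'
    omega

lemma stair (γ : Fin r → ℤ) (hγ2 : ∀ i j : Fin r, (j : ℕ) = (i : ℕ) + 1 → |γ j - γ i| ≤ 1) :
    ∀ a b : Fin r, a ≤ b →
      ((a : ℕ) : ℤ) - γ a ≤ ((b : ℕ) : ℤ) - γ b ∧ ((a : ℕ) : ℤ) + γ a ≤ ((b : ℕ) : ℤ) + γ b := by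
  have key : ∀ d : ℕ, ∀ a b : Fin r, (b : ℕ) = (a : ℕ) + d →
      ((a : ℕ) : ℤ) - γ a ≤ ((b : ℕ) : ℤ) - γ b ∧ ((a : ℕ) : ℤ) + γ a ≤ ((b : ℕ) : ℤ) + γ b := by
    intro d
    induction d with
    | zero =>
      intro a b h
      have hab : a = b := Fin.ext (by omega)
      subst hab
      exact ⟨le_refl _, le_refl _⟩
    | succ d ih =>
      intro a b h
      have hcr : (a : ℕ) + d < r := by omega
      set c : Fin r := ⟨(a : ℕ) + d, hcr⟩ with hc
      have ih' := ih a c rfl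
      have hstep := abs_le.1 (hγ2 c b (by simp only [hc]; omega))
      have hcv : (c : ℕ) = (a : ℕ) + d := rfl
      constructor <;> omega
  intro a b hab
  exact key ((b : ℕ) - (a : ℕ)) a b (by rw [Fin.le_def] at hab; omega)

lemma inv_step (γ : Fin r → ℤ) (hγ0 : ∀ i, 0 ≤ γ i)
    (hst : ∀ a b : Fin r, a ≤ b →
      ((a : ℕ) : ℤ) - γ a ≤ ((b : ℕ) : ℤ) - γ b ∧ ((a : ℕ) : ℤ) + γ a ≤ ((b : ℕ) : ℤ) + γ b)
    (hz : 0 < z.im) (h1 : Inv1 v) (h2 : Inv2 z v) :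
    Inv1 (fun i => ∑ j ∈ univ.filter (Adm γ i), (if j < i then z else 1) * v j)
    ∧ Inv2 z (fun i => ∑ j ∈ univ.filter (Adm γ i), (if j < i then z else 1) * v j) := by
  constructor
  · intro a b hab
    simp only
    rw [vsplit z γ a (hγ0 a) v, vsplit z γ b (hγ0 b) v]
    exact (core z v hz h1 h2 (((a : ℕ) : ℤ) - γ a) (((a : ℕ) : ℤ) + γ a)
      (((b : ℕ) : ℤ) - γ b) (((b : ℕ) : ℤ) + γ b)
      (hst a b hab).1 (hst a b hab).2
      (by have := hγ0 a; omega) (by have := hγ0 b; omega)).1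
  · intro a b hab
    simp only
    rw [vsplit z γ a (hγ0 a) v, vsplit z γ b (hγ0 b) v]
    exact (core z v hz h1 h2 (((a : ℕ) : ℤ) - γ a) (((a : ℕ) : ℤ) + γ a)
      (((b : ℕ) : ℤ) - γ b) (((b : ℕ) : ℤ) + γ b)
      (hst a b hab).1 (hst a b hab).2
      (by have := hγ0 a; omega) (by have := hγ0 b; omega)).2

lemma nz_step (γ : Fin r → ℤ) (i : Fin r) (hγ0 : 0 ≤ γ i)
    (hz : 0 < z.im) (h1 : Inv1 v) (h2 : Inv2 z v)
    (j0 : Fin r) (hadm : Adm γ i j0) (hv : v j0 ≠ 0) :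
    (∑ j ∈ univ.filter (Adm γ i), (if j < i then z else 1) * v j) ≠ 0 := by
  classical
  rw [vsplit z γ i hγ0 v]
  set p : ℤ := ((i : ℕ) : ℤ) - γ i with hp
  set q : ℤ := ((i : ℕ) : ℤ) + γ i with hq
  have hpq : p ≤ q + 1 := by omega
  set S := ∑ j ∈ univ.filter (fun j : Fin r => ((j : ℕ) : ℤ) < p), v j with hS
  set T := ∑ j ∈ univ.filter (fun j : Fin r => q < ((j : ℕ) : ℤ)), v j with hT
  by_cases hcase : ∃ j : Fin r, q < ((j : ℕ) : ℤ) ∧ v j ≠ 0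
  · -- minimal such j
    set F := univ.filter (fun j : Fin r => q < ((j : ℕ) : ℤ) ∧ v j ≠ 0) with hF
    have hFne : F.Nonempty := by
      obtain ⟨j, hj1, hj2⟩ := hcase
      exact ⟨j, by simp [hF, hj1, hj2]⟩
    set m := F.min' hFne with hm
    have hmF : m ∈ F := F.min'_mem hFne
    have hmq : q < ((m : ℕ) : ℤ) ∧ v m ≠ 0 := by
      have := hmF; simp only [hF, Finset.mem_filter, Finset.mem_univ, true_and] at this
      exact this
    have hpos : 0 < (z * (v m * (starRingEnd ℂ) (z * S + T))).im := by
      have expand : z * (v m * (starRingEnd ℂ) (z * S + T))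
          = (z * (starRingEnd ℂ) z) * (v m * (starRingEnd ℂ) S)
            + z * (v m * (starRingEnd ℂ) T) := by
        simp only [map_add, map_mul]; ring
      rw [expand, Complex.add_im]
      have g1 : 0 ≤ ((z * (starRingEnd ℂ) z) * (v m * (starRingEnd ℂ) S)).im := by
        apply nsq_mul_im_nonneg
        rw [hS, map_sum, Finset.mul_sum, Complex.im_sum]
        apply Finset.sum_nonneg
        intro a ha
        simp only [Finset.mem_filter, Finset.mem_univ, true_and] at ha
        apply h1 a m
        rw [Fin.le_def]; omega
      have g2 : 0 < (z * (v m * (starRingEnd ℂ) T)).im := by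
        rw [hT, map_sum, Finset.mul_sum, Finset.mul_sum, Complex.im_sum]
        have hmmem : m ∈ univ.filter (fun j : Fin r => q < ((j : ℕ) : ℤ)) := by
          simp [hmq.1]
        rw [← Finset.add_sum_erase _ _ hmmem]
        have gm : 0 < (z * (v m * (starRingEnd ℂ) (v m))).im := by
          rw [Complex.mul_conj]
          simp only [Complex.mul_im, Complex.ofReal_re, Complex.ofReal_im, mul_zero, zero_add]
          exact mul_pos hz (by
            have := Complex.normSq_pos.2 hmq.2
            exact this)
        have grest : 0 ≤ ∑ b ∈ (univ.filter (fun j : Fin r => q < ((j : ℕ) : ℤ))).erase m,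
            (z * (v m * (starRingEnd ℂ) (v b))).im := by
          apply Finset.sum_nonneg
          intro b hb
          have hb' := Finset.mem_of_mem_erase hb
          simp only [Finset.mem_filter, Finset.mem_univ, true_and] at hb'
          by_cases hmb : m ≤ b
          · exact h2 m b hmb
          · have hbm : b < m := lt_of_not_ge hmb
            have hvb : v b = 0 := by
              by_contra hvb
              have hbF : b ∈ F := by simp [hF, hb', hvb]
              have := F.min'_le b hbF
              exact absurd (lt_of_lt_of_le hbm this) (lt_irrefl b)
            simp [hvb]
        linarith
      linarith
    intro h0
    rw [h0] at hpos
    simp at hpos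
  · push_neg at hcase
    have hT0 : T = 0 := by
      rw [hT]
      apply Finset.sum_eq_zero
      intro j hj
      simp only [Finset.mem_filter, Finset.mem_univ, true_and] at hj
      exact hcase j hj
    have hj0p : ((j0 : ℕ) : ℤ) < p := by
      rcases (adm_iff γ i j0).1 hadm with h | h
      · exact h
      · exact absurd (hcase j0 h) hv
    set F := univ.filter (fun j : Fin r => ((j : ℕ) : ℤ) < p ∧ v j ≠ 0) with hF
    have hFne : F.Nonempty := ⟨j0, by simp [hF, hj0p, hv]⟩
    set m := F.max' hFne with hm
    have hmF : m ∈ F := F.max'_mem hFne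
    have hmq : ((m : ℕ) : ℤ) < p ∧ v m ≠ 0 := by
      have := hmF; simp only [hF, Finset.mem_filter, Finset.mem_univ, true_and] at this
      exact this
    have hpos : 0 < (z * (S * (starRingEnd ℂ) (v m))).im := by
      rw [hS, Finset.sum_mul, Finset.mul_sum, Complex.im_sum]
      have hmmem : m ∈ univ.filter (fun j : Fin r => ((j : ℕ) : ℤ) < p) := by
        simp [hmq.1]
      rw [← Finset.add_sum_erase _ _ hmmem]
      have gm : 0 < (z * (v m * (starRingEnd ℂ) (v m))).im := by
        rw [Complex.mul_conj]
        simp only [Complex.mul_im, Complex.ofReal_re, Complex.ofReal_im, mul_zero, zero_add]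
        exact mul_pos hz (Complex.normSq_pos.2 hmq.2)
      have grest : 0 ≤ ∑ a ∈ (univ.filter (fun j : Fin r => ((j : ℕ) : ℤ) < p)).erase m,
          (z * (v a * (starRingEnd ℂ) (v m))).im := by
        apply Finset.sum_nonneg
        intro a ha
        have ha' := Finset.mem_of_mem_erase ha
        simp only [Finset.mem_filter, Finset.mem_univ, true_and] at ha'
        by_cases ham : a ≤ m
        · exact h2 a m ham
        · have hma : m < a := lt_of_not_ge ham
          have hva : v a = 0 := by
            by_contra hva
            have haF : a ∈ F := by simp [hF, ha', hva]
            have h2' : a ≤ m := by rw [hm]; exact F.le_max' a haF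
            exact absurd (lt_of_lt_of_le hma h2') (lt_irrefl m)
          simp [hva]
      linarith
    intro h0
    rw [hT0, add_zero] at h0
    rw [show z * (S * (starRingEnd ℂ) (v m)) = (z * S) * (starRingEnd ℂ) (v m) by ring,
      h0] at hpos
    simp at hpos

end analytic

def snocEq (m : ℕ) : ((Fin (m+1) → Fin r) × Fin r) ≃ (Fin (m+1+1) → Fin r) where
  toFun p := Fin.snoc p.1 p.2
  invFun w := (fun j => w j.castSucc, w (Fin.last (m+1)))
  left_inv p := by
    apply Prod.ext
    · funext j; simp [Fin.snoc_castSucc]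
    · simp [Fin.snoc_last]
  right_inv w := Fin.snoc_init_self w

lemma good_snoc (γ : Fin r → ℤ) {m : ℕ} (u : Fin (m+1) → Fin r) (x : Fin r) :
    Good γ (Fin.snoc u x : Fin (m+1+1) → Fin r) ↔ Good γ u ∧ Adm γ x (u (Fin.last m)) := by
  unfold Good
  constructor
  · rintro ⟨h0, hstep⟩
    refine ⟨⟨?_, fun j => ?_⟩, ?_⟩
    · rwa [show (0 : Fin (m+1+1)) = Fin.castSucc 0 from (Fin.castSucc_zero).symm,
        Fin.snoc_castSucc] at h0
    · have := hstep j.castSucc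
      rwa [Fin.succ_castSucc, Fin.snoc_castSucc, Fin.snoc_castSucc] at this
    · have := hstep (Fin.last m)
      rwa [Fin.succ_last, Fin.snoc_last, Fin.snoc_castSucc] at this
  · rintro ⟨⟨h0, hstep⟩, hlast⟩
    refine ⟨?_, fun j => ?_⟩
    · rw [show (0 : Fin (m+1+1)) = Fin.castSucc 0 from (Fin.castSucc_zero).symm,
        Fin.snoc_castSucc]; exact h0
    · refine Fin.lastCases ?_ (fun j' => ?_) j
      · rw [Fin.succ_last, Fin.snoc_last, Fin.snoc_castSucc]; exact hlast
      · rw [Fin.succ_castSucc, Fin.snoc_castSucc, Fin.snoc_castSucc]; exact hstep j'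

lemma asc_snoc {m : ℕ} (u : Fin (m+1) → Fin r) (x : Fin r) :
    asc (Fin.snoc u x : Fin (m+1+1) → Fin r) = asc u + (if u (Fin.last m) < x then 1 else 0) := by
  unfold asc
  rw [Finset.card_filter, Finset.card_filter, Fin.sum_univ_castSucc]
  simp only [Fin.succ_castSucc, Fin.snoc_castSucc, Fin.succ_last, Fin.snoc_last]

lemma Fv_eq (γ : Fin r → ℤ) (z : ℂ) :
    ∀ (m : ℕ) (i : Fin r),
      (∑ w ∈ univ.filter (fun w : Fin (m+1) → Fin r => Good γ w ∧ w (Fin.last m) = i),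
        z ^ asc w) = Vv γ z m i := by
  intro m
  induction m with
  | zero =>
    intro i
    haveI : Unique (Fin (0+1)) := ⟨⟨0⟩, fun a => Fin.ext (by omega)⟩
    rw [Finset.sum_filter]
    have hpt : ∀ x : Fin r,
        (if ((x : ℕ) = 0 ∧ x = i) then z ^ (0:ℕ) else 0)
        = (fun w : Fin (0+1) → Fin r =>
            if (Good γ w ∧ w (Fin.last 0) = i) then z ^ asc w else 0)
            ((Equiv.funUnique (Fin (0+1)) (Fin r)).symm x) := by
      intro x
      have hw0 : ((Equiv.funUnique (Fin (0+1)) (Fin r)).symm x) 0 = x := rfl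
      have hlast : ((Equiv.funUnique (Fin (0+1)) (Fin r)).symm x) (Fin.last 0) = x := rfl
      have hgood : Good γ ((Equiv.funUnique (Fin (0+1)) (Fin r)).symm x) ↔ (x : ℕ) = 0 := by
        unfold Good
        simp [hw0]
      have hasc : asc ((Equiv.funUnique (Fin (0+1)) (Fin r)).symm x) = 0 := by
        unfold asc
        simp
      show (if ((x : ℕ) = 0 ∧ x = i) then z ^ (0:ℕ) else 0)
          = if (Good γ ((Equiv.funUnique (Fin (0+1)) (Fin r)).symm x)
              ∧ ((Equiv.funUnique (Fin (0+1)) (Fin r)).symm x) (Fin.last 0) = i)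
            then z ^ asc ((Equiv.funUnique (Fin (0+1)) (Fin r)).symm x) else 0
      by_cases h1 : (x : ℕ) = 0 <;> by_cases h2 : x = i
      · rw [if_pos ⟨h1, h2⟩, if_pos ⟨hgood.2 h1, by rw [hlast]; exact h2⟩, hasc]
      · rw [if_neg (by tauto), if_neg (by
          rintro ⟨-, hl⟩
          rw [hlast] at hl
          exact h2 hl)]
      · rw [if_neg (by tauto), if_neg (by
          rintro ⟨hg, -⟩
          exact h1 (hgood.1 hg))]
      · rw [if_neg (by tauto), if_neg (by
          rintro ⟨hg, -⟩
          exact h1 (hgood.1 hg))]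
    rw [← Fintype.sum_equiv ((Equiv.funUnique (Fin (0+1)) (Fin r)).symm) _ _ hpt]
    have : ∀ x : Fin r, (if ((x : ℕ) = 0 ∧ x = i) then z ^ (0:ℕ) else 0)
        = if x = i then (if (i : ℕ) = 0 then (1:ℂ) else 0) else 0 := by
      intro x
      by_cases h1 : x = i
      · subst h1
        by_cases h2 : (x : ℕ) = 0 <;> simp [h2]
      · simp [h1]
    rw [Finset.sum_congr rfl (fun x _ => this x), Finset.sum_ite_eq' univ i]
    simp [Vv]
  | succ m ih =>
    intro i
    rw [Finset.sum_filter]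
    rw [← Fintype.sum_equiv (snocEq (r := r) m)
      (fun p : (Fin (m+1) → Fin r) × Fin r =>
        if (Good γ (Fin.snoc p.1 p.2 : Fin (m+1+1) → Fin r)
            ∧ (Fin.snoc p.1 p.2 : Fin (m+1+1) → Fin r) (Fin.last (m+1)) = i)
        then z ^ asc (Fin.snoc p.1 p.2 : Fin (m+1+1) → Fin r) else 0)
      (fun w => if (Good γ w ∧ w (Fin.last (m+1)) = i) then z ^ asc w else 0)
      (fun p => rfl)]
    rw [Fintype.sum_prod_type]
    have inner : ∀ u : Fin (m+1) → Fin r,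
        (∑ x : Fin r, if (Good γ (Fin.snoc u x : Fin (m+1+1) → Fin r)
            ∧ (Fin.snoc u x : Fin (m+1+1) → Fin r) (Fin.last (m+1)) = i)
          then z ^ asc (Fin.snoc u x : Fin (m+1+1) → Fin r) else 0)
        = if (Good γ u ∧ Adm γ i (u (Fin.last m)))
          then (if u (Fin.last m) < i then z else 1) * z ^ asc u else 0 := by
      intro u
      have step1 : ∀ x : Fin r,
          (if (Good γ (Fin.snoc u x : Fin (m+1+1) → Fin r)
              ∧ (Fin.snoc u x : Fin (m+1+1) → Fin r) (Fin.last (m+1)) = i)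
            then z ^ asc (Fin.snoc u x : Fin (m+1+1) → Fin r) else 0)
          = if x = i then (if (Good γ u ∧ Adm γ x (u (Fin.last m)))
              then (if u (Fin.last m) < x then z else 1) * z ^ asc u else 0) else 0 := by
        intro x
        rw [Fin.snoc_last]
        by_cases h1 : x = i
        · subst h1
          by_cases h2 : Good γ (Fin.snoc u x : Fin (m+1+1) → Fin r)
          · rw [if_pos ⟨h2, rfl⟩, if_pos rfl, if_pos ((good_snoc γ u x).1 h2), asc_snoc,
              pow_add]
            by_cases h3 : u (Fin.last m) < x <;> simp [h3, mul_comm]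
          · rw [if_neg (by tauto), if_pos rfl, if_neg (by
              intro hc
              exact h2 ((good_snoc γ u x).2 hc))]
        · rw [if_neg (by tauto), if_neg h1]
      rw [Finset.sum_congr rfl (fun x _ => step1 x), Finset.sum_ite_eq' univ i]
      simp
    rw [Finset.sum_congr rfl (fun u _ => inner u)]
    -- now the right-hand side
    show _ = ∑ j ∈ univ.filter (Adm γ i), (if j < i then z else 1) * Vv γ z m j
    have rhs1 : ∀ j : Fin r, (if j < i then z else 1) * Vv γ z m j
        = ∑ u : Fin (m+1) → Fin r, (if (Good γ u ∧ u (Fin.last m) = j)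
            then (if j < i then z else 1) * z ^ asc u else 0) := by
      intro j
      rw [← ih j, Finset.sum_filter, Finset.mul_sum]
      apply Finset.sum_congr rfl
      intro u _
      by_cases h : Good γ u ∧ u (Fin.last m) = j <;> simp [h]
    rw [Finset.sum_congr rfl (fun j _ => rhs1 j)]
    rw [Finset.sum_filter]
    have push : ∀ j : Fin r,
        (if Adm γ i j then (∑ u : Fin (m+1) → Fin r, if (Good γ u ∧ u (Fin.last m) = j)
            then (if j < i then z else 1) * z ^ asc u else 0) else 0)
        = ∑ u : Fin (m+1) → Fin r, (if Adm γ i j then (if (Good γ u ∧ u (Fin.last m) = j)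
            then (if j < i then z else 1) * z ^ asc u else 0) else 0) := by
      intro j
      by_cases h : Adm γ i j <;> simp [h]
    rw [Finset.sum_congr rfl (fun j _ => push j), Finset.sum_comm]
    apply Finset.sum_congr rfl
    intro u _
    have key : ∀ j : Fin r,
        (if Adm γ i j then (if (Good γ u ∧ u (Fin.last m) = j)
            then (if j < i then z else 1) * z ^ asc u else 0) else 0)
        = if j = u (Fin.last m) then (if (Good γ u ∧ Adm γ i (u (Fin.last m)))
            then (if u (Fin.last m) < i then z else 1) * z ^ asc u else 0) else 0 := by
      intro j
      by_cases h1 : j = u (Fin.last m)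
      · subst h1
        by_cases h2 : Adm γ i (u (Fin.last m)) <;> by_cases h3 : Good γ u <;> simp [h2, h3]
      · by_cases h2 : Adm γ i j
        · rw [if_pos h2, if_neg h1, if_neg (by
            rintro ⟨-, hlast⟩
            exact h1 hlast.symm)]
        · rw [if_neg h2, if_neg h1]
    rw [Finset.sum_congr rfl (fun j _ => key j), Finset.sum_ite_eq' univ (u (Fin.last m))]
    simp

lemma invVv (γ : Fin r → ℤ) (hγ0 : ∀ i, 0 ≤ γ i)
    (hst : ∀ a b : Fin r, a ≤ b →
      ((a : ℕ) : ℤ) - γ a ≤ ((b : ℕ) : ℤ) - γ b ∧ ((a : ℕ) : ℤ) + γ a ≤ ((b : ℕ) : ℤ) + γ b)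
    (z : ℂ) (hz : 0 < z.im) :
    ∀ m : ℕ, Inv1 (Vv γ z m) ∧ Inv2 z (Vv γ z m) := by
  intro m
  induction m with
  | zero =>
    constructor
    · intro a b _
      show 0 ≤ ((if (b : ℕ) = 0 then (1:ℂ) else 0) * (starRingEnd ℂ) (if (a : ℕ) = 0 then (1:ℂ) else 0)).im
      by_cases ha : (a : ℕ) = 0 <;> by_cases hb : (b : ℕ) = 0 <;> simp [ha, hb]
    · intro a b _
      show 0 ≤ (z * ((if (a : ℕ) = 0 then (1:ℂ) else 0) * (starRingEnd ℂ) (if (b : ℕ) = 0 then (1:ℂ) else 0))).im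
      by_cases ha : (a : ℕ) = 0 <;> by_cases hb : (b : ℕ) = 0 <;> simp [ha, hb, le_of_lt hz]
  | succ m ih =>
    exact inv_step z (Vv γ z m) γ hγ0 hst hz ih.1 ih.2

lemma neVv (γ : Fin r → ℤ) (hγ0 : ∀ i, 0 ≤ γ i)
    (hst : ∀ a b : Fin r, a ≤ b →
      ((a : ℕ) : ℤ) - γ a ≤ ((b : ℕ) : ℤ) - γ b ∧ ((a : ℕ) : ℤ) + γ a ≤ ((b : ℕ) : ℤ) + γ b)
    (z : ℂ) (hz : 0 < z.im) :
    ∀ (m : ℕ) (i : Fin r),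
      (univ.filter (fun w : Fin (m+1) → Fin r => Good γ w ∧ w (Fin.last m) = i)).Nonempty →
      Vv γ z m i ≠ 0 := by
  intro m
  induction m with
  | zero =>
    rintro i ⟨w, hw⟩
    simp only [Finset.mem_filter, Finset.mem_univ, true_and] at hw
    have hi : (i : ℕ) = 0 := by
      rw [← hw.2]
      have : Fin.last 0 = (0 : Fin 1) := rfl
      rw [this]
      exact hw.1.1
    show (if (i : ℕ) = 0 then (1:ℂ) else 0) ≠ 0
    simp [hi]
  | succ m ih =>
    rintro i ⟨w, hw⟩
    simp only [Finset.mem_filter, Finset.mem_univ, true_and] at hw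
    obtain ⟨⟨h0, hsteps⟩, hlast⟩ := hw
    set u : Fin (m+1) → Fin r := fun j => w j.castSucc with hu
    have hgu : Good γ u := by
      constructor
      · show ((w (Fin.castSucc 0) : ℕ)) = 0
        rwa [Fin.castSucc_zero]
      · intro j
        have := hsteps j.castSucc
        show Adm γ (u j.succ) (u j.castSucc)
        have e1 : u j.succ = w (Fin.castSucc j).succ := by
          rw [hu]; simp only [Fin.succ_castSucc]
        have e2 : u j.castSucc = w (Fin.castSucc j).castSucc := rfl
        rw [e1, e2]
        exact this
    have hadm : Adm γ i (u (Fin.last m)) := by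
      have := hsteps (Fin.last m)
      rw [Fin.succ_last, hlast] at this
      exact this
    have hne : Vv γ z m (u (Fin.last m)) ≠ 0 :=
      ih (u (Fin.last m)) ⟨u, by simp [Finset.mem_filter, hgu]⟩
    show (∑ j ∈ univ.filter (Adm γ i), (if j < i then z else 1) * Vv γ z m j) ≠ 0
    exact nz_step z (Vv γ z m) γ i (hγ0 i) hz (invVv γ hγ0 hst z hz m).1
      (invVv γ hγ0 hst z hz m).2 (u (Fin.last m)) hadm hne

end SW16

/-- The ascent generating polynomial over the generalized Smirnov words
`SW_γ(n,r)` is real-rooted. -/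
theorem stmt16 (n r : ℕ) (hn : 1 ≤ n) (hr : 2 ≤ r) (γ : Fin r → ℤ)
    (hγ1 : ∀ i, 0 ≤ γ i ∧ γ i ≤ (r : ℤ) - 2)
    (hγ2 : ∀ i j : Fin r, (j : ℕ) = (i : ℕ) + 1 → |γ j - γ i| ≤ 1) :
    RealRooted (∑ w ∈ Finset.univ.filter (fun w : Fin (n + 1) → Fin r =>
      (w 0 : ℕ) = 0 ∧ (w (Fin.last n) : ℕ) = 0 ∧
        ∀ j : Fin n, |((w j.succ : ℕ) : ℤ) - ((w j.castSucc : ℕ) : ℤ)| > γ (w j.succ)),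
      Polynomial.X ^ asc w) := by
  classical
  have hr0 : 0 < r := by omega
  set SW : Finset (Fin (n + 1) → Fin r) := Finset.univ.filter (fun w : Fin (n + 1) → Fin r =>
      (w 0 : ℕ) = 0 ∧ (w (Fin.last n) : ℕ) = 0 ∧
        ∀ j : Fin n, |((w j.succ : ℕ) : ℤ) - ((w j.castSucc : ℕ) : ℤ)| > γ (w j.succ)) with hSW
  have hfilter : SW = Finset.univ.filter
      (fun w : Fin (n+1) → Fin r => SW16.Good γ w ∧ w (Fin.last n) = (⟨0, hr0⟩ : Fin r)) := by
    rw [hSW]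
    apply Finset.filter_congr
    intro w _
    unfold SW16.Good SW16.Adm
    constructor
    · rintro ⟨h0, hl, hs⟩
      exact ⟨⟨h0, fun j => hs j⟩, Fin.ext (by simpa using hl)⟩
    · rintro ⟨⟨h0, hs⟩, hl⟩
      refine ⟨h0, ?_, fun j => hs j⟩
      rw [hl]
  by_cases hempty : SW = ∅
  · left
    rw [hempty, Finset.sum_empty]
  · right
    intro ζ hζ
    by_contra him
    have key : ∀ ξ : ℂ, 0 < ξ.im → (∑ w ∈ SW, ξ ^ asc w) ≠ 0 := by
      intro ξ hξ
      rw [hfilter, SW16.Fv_eq γ ξ n (⟨0, hr0⟩ : Fin r)]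
      apply SW16.neVv γ (fun i => (hγ1 i).1) (SW16.stair γ hγ2) ξ hξ n (⟨0, hr0⟩ : Fin r)
      rw [← hfilter]
      exact Finset.nonempty_iff_ne_empty.2 hempty
    have heval : (Polynomial.aeval ζ) (∑ w ∈ SW, (Polynomial.X : Polynomial ℝ) ^ asc w)
        = ∑ w ∈ SW, ζ ^ asc w := by
      rw [map_sum]
      apply Finset.sum_congr rfl
      intro w _
      rw [map_pow, Polynomial.aeval_X]
    have hsum0 : (∑ w ∈ SW, ζ ^ asc w) = 0 := by rw [← heval]; exact hζ
    rcases lt_or_gt_of_ne him with hlt | hgt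
    · have hconj : (starRingEnd ℂ) (∑ w ∈ SW, ζ ^ asc w)
          = ∑ w ∈ SW, ((starRingEnd ℂ) ζ) ^ asc w := by
        rw [map_sum]
        apply Finset.sum_congr rfl
        intro w _
        rw [map_pow]
      have h1 : 0 < ((starRingEnd ℂ) ζ).im := by
        simp only [Complex.conj_im]
        linarith
      exact key ((starRingEnd ℂ) ζ) h1 (by rw [← hconj, hsum0, map_zero])
    · exact key ζ hgt hsum0
end
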